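/- arXiv:math/0701306 — 8 statements merged into one kernel-verified Lean document; each statement's English description precedes it below -/
import Mathlib

section
/- Let A be a unital Banach *-algebra and let a, b be two commuting elements of A. Then the spectrum of a is contained in the set sp(b) + r_λ(b−a)·D, where D is the closed unit disc; that is, for every μ ∈ sp(a) there exists λ ∈ sp(b) with |μ − λ| ≤ r_λ(b − a). -/
open Filter ENNReal NNReal Topology

/-- The spectral radius is finite in a Banach algebra. -/
lemma spectralRadius_ne_top' {A : Type*} [NormedRing A] [NormedAlgebra ℂ A]
    [CompleteSpace A] (x : A) : spectralRadius ℂ x ≠ ⊤ := by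
  refine ne_top_of_le_ne_top ?_ (spectrum.spectralRadius_le_pow_nnnorm_pow_one_div ℂ x 0)
  exact ENNReal.mul_ne_top (ENNReal.rpow_ne_top_of_nonneg (by norm_num) ENNReal.coe_ne_top)
    (ENNReal.rpow_ne_top_of_nonneg (by norm_num) ENNReal.coe_ne_top)

/-- Submultiplicativity of the spectral radius for commuting elements. -/
lemma spectralRadius_mul_le_of_commute {A : Type*} [NormedRing A] [NormedAlgebra ℂ A]
    [CompleteSpace A] {x y : A} (h : Commute x y) :
    spectralRadius ℂ (x * y) ≤ spectralRadius ℂ x * spectralRadius ℂ y := by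
  have hx := spectrum.pow_nnnorm_pow_one_div_tendsto_nhds_spectralRadius x
  have hy := spectrum.pow_nnnorm_pow_one_div_tendsto_nhds_spectralRadius y
  have hxy : Tendsto
      (fun n : ℕ => (‖x ^ n‖₊ : ℝ≥0∞) ^ (1 / n : ℝ) * (‖y ^ n‖₊ : ℝ≥0∞) ^ (1 / n : ℝ))
      atTop (𝓝 (spectralRadius ℂ x * spectralRadius ℂ y)) :=
    ENNReal.Tendsto.mul hx (Or.inr (spectralRadius_ne_top' y)) hy
      (Or.inr (spectralRadius_ne_top' x))
  calc spectralRadius ℂ (x * y)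
      ≤ atTop.liminf fun n : ℕ => (‖(x * y) ^ n‖₊ : ℝ≥0∞) ^ (1 / n : ℝ) :=
        spectrum.spectralRadius_le_liminf_pow_nnnorm_pow_one_div ℂ (x * y)
    _ ≤ atTop.liminf
        (fun n : ℕ => (‖x ^ n‖₊ : ℝ≥0∞) ^ (1 / n : ℝ) * (‖y ^ n‖₊ : ℝ≥0∞) ^ (1 / n : ℝ)) := by
        refine liminf_le_liminf (Eventually.of_forall fun n => ?_)
        rw [h.mul_pow, ← ENNReal.mul_rpow_of_nonneg _ _ (by positivity)]
        exact ENNReal.rpow_le_rpow (by exact_mod_cast nnnorm_mul_le _ _) (by positivity)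
    _ = spectralRadius ℂ x * spectralRadius ℂ y := hxy.liminf_eq

/-- If `a` and `b` are commuting elements of a unital Banach `*`-algebra, then
`sp(a) ⊆ sp(b) + r_λ(b - a) • 𝔻`: every spectral value `μ` of `a` is within distance
`r_λ(b - a)` of some spectral value `λ` of `b`. -/
theorem spectrum_subset_spectrum_add_spectralRadius_closedBall
    {A : Type*} [NormedRing A] [NormedAlgebra ℂ A] [CompleteSpace A]
    [StarRing A] [StarModule ℂ A]
    (a b : A) (hab : a * b = b * a) (μ : ℂ) (hμ : μ ∈ spectrum ℂ a) :
    ∃ lam ∈ spectrum ℂ b, (‖μ - lam‖₊ : ENNReal) ≤ spectralRadius ℂ (b - a) := by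
  by_contra hcon
  push_neg at hcon
  -- hcon : ∀ lam ∈ spectrum ℂ b, spectralRadius ℂ (b - a) < ‖μ - lam‖₊
  have hnt : Nontrivial A := by
    rcases subsingleton_or_nontrivial A with hs | hn
    · exact absurd (isUnit_of_subsingleton _) (spectrum.mem_iff.mp hμ)
    · exact hn
  set c : A := b - a with hc
  set m : A := algebraMap ℂ A μ with hm
  -- μ is not in the spectrum of b
  have hμb : μ ∉ spectrum ℂ b := fun hmem => by simpa using hcon μ hmem
  have hu : IsUnit (m - b) := spectrum.notMem_iff.mp hμb
  set u : Aˣ := hu.unit with hu_def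
  have hu_spec : (↑u : A) = m - b := hu.unit_spec
  -- the minimal distance from μ to the spectrum of b
  obtain ⟨lam₀, hlam₀, hmin⟩ := (spectrum.isCompact b).exists_isMinOn (spectrum.nonempty b)
    ((continuous_nnnorm.comp (continuous_const.sub continuous_id)).continuousOn
      (f := fun z : ℂ => ‖μ - z‖₊))
  set d : ℝ≥0 := ‖μ - lam₀‖₊ with hd
  have hrc : spectralRadius ℂ c < (d : ℝ≥0∞) := hcon lam₀ hlam₀
  have hd0 : (d : ℝ≥0∞) ≠ 0 := by
    intro h0
    rw [h0] at hrc
    simp at hrc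
  have hdtop : (d : ℝ≥0∞) ≠ ⊤ := ENNReal.coe_ne_top
  -- spectral radius of u⁻¹ is at most d⁻¹
  have hu_inv : spectralRadius ℂ (↑u⁻¹ : A) ≤ (d : ℝ≥0∞)⁻¹ := by
    refine iSup₂_le fun z hz => ?_
    have hz0 : z ≠ 0 := by
      intro h0
      rw [h0] at hz
      exact ((spectrum.zero_mem_iff ℂ).mp hz) u⁻¹.isUnit
    set zu : ℂˣ := Units.mk0 z hz0 with hzu
    have hz_inv : (↑zu⁻¹ : ℂ) ∈ spectrum ℂ (↑u : A) := by
      have := (spectrum.inv_mem_iff (r := zu) (a := u⁻¹)).mp (by exact_mod_cast hz)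
      simpa using this
    -- z⁻¹ ∈ spectrum (m - b) = {μ} - spectrum b
    rw [hu_spec, hm, ← spectrum.singleton_sub_eq] at hz_inv
    obtain ⟨p, hp, q, hq, hpq⟩ := hz_inv
    rw [Set.mem_singleton_iff] at hp
    rw [hp] at hpq
    have hdle : (d : ℝ≥0) ≤ ‖μ - q‖₊ := hmin hq
    have hzinv : z⁻¹ = μ - q := by
      have h' : μ - q = (↑zu⁻¹ : ℂ) := hpq
      rw [h']; simp [hzu]
    have hz_eq : z = (μ - q)⁻¹ := by rw [← hzinv, inv_inv]
    rw [hz_eq, nnnorm_inv]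
    rw [ENNReal.coe_inv (nnnorm_ne_zero_iff.mpr (by rw [← hzinv]; exact inv_ne_zero hz0))]
    exact_mod_cast ENNReal.inv_le_inv.mpr (by exact_mod_cast hdle)
  -- u⁻¹ and c commute
  have hcb : Commute c b := by
    simp only [hc, Commute, SemiconjBy]
    rw [sub_mul, mul_sub, hab]
  have hcu : Commute c (↑u : A) := by
    rw [hu_spec, hm]
    exact (Algebra.commute_algebraMap_right μ c).sub_right hcb
  have hcuinv : Commute (↑u⁻¹ : A) c := (hcu.units_inv_right).symm
  -- the spectral radius of u⁻¹ * c is < 1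
  have key : spectralRadius ℂ ((↑u⁻¹ : A) * c) < 1 := by
    calc spectralRadius ℂ ((↑u⁻¹ : A) * c)
        ≤ spectralRadius ℂ (↑u⁻¹ : A) * spectralRadius ℂ c :=
          spectralRadius_mul_le_of_commute hcuinv
      _ ≤ (d : ℝ≥0∞)⁻¹ * spectralRadius ℂ c :=
          mul_le_mul_left hu_inv _
      _ < (d : ℝ≥0∞)⁻¹ * (d : ℝ≥0∞) := by
          exact ENNReal.mul_lt_mul_iff_right (by simp [hdtop]) (by simp [hd0]) |>.mpr hrc
      _ = 1 := ENNReal.inv_mul_cancel hd0 hdtop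
  -- hence 1 + u⁻¹ * c is a unit
  have hres : (-1 : ℂ) ∈ resolventSet ℂ ((↑u⁻¹ : A) * c) :=
    spectrum.mem_resolventSet_of_spectralRadius_lt (by simpa using key)
  rw [spectrum.mem_resolventSet_iff] at hres
  have hunit : IsUnit (1 + (↑u⁻¹ : A) * c) := by
    have := hres.neg
    simpa [neg_sub, sub_eq_add_neg, map_neg, add_comm] using this
  -- so m - a = u * (1 + u⁻¹ * c) is a unit
  have hfinal : IsUnit (algebraMap ℂ A μ - a) := by
    have heq : algebraMap ℂ A μ - a = ↑u * (1 + (↑u⁻¹ : A) * c) := by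
      rw [mul_add, mul_one, ← mul_assoc, u.mul_inv, one_mul, hu_spec, hc, hm]
      abel
    rw [heq]
    exact u.isUnit.mul hunit
  exact (spectrum.mem_iff.mp hμ) hfinal
end

section
/- Let A be a unital complex Banach algebra and let x ∈ A be an element whose spectrum is contained in the open positive half-line (0,∞) of the reals. Then x has a unique square root y in A with sp(y) ⊆ [0,∞); moreover sp(y) ⊆ (0,∞), and y belongs to the closure of the (not necessarily unital) subalgebra of A generated by x. -/
open Finset
open scoped Topology

/-- Ratio identity for Catalan numbers. -/
lemma sqrtAux_cat_ratio (n : ℕ) : (n + 2) * catalan (n + 1) = 2 * (2 * n + 1) * catalan n := by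
  have h1 : (n + 1 + 1) * catalan (n + 1) = (n + 1).centralBinom :=
    succ_mul_catalan_eq_centralBinom (n + 1)
  have h2 : (n + 1) * catalan n = n.centralBinom := succ_mul_catalan_eq_centralBinom n
  have h3 : (n + 1) * (n + 1).centralBinom = 2 * (2 * n + 1) * n.centralBinom :=
    Nat.succ_mul_centralBinom_succ n
  have key : (n + 1) * ((n + 2) * catalan (n + 1)) = (n + 1) * (2 * (2 * n + 1) * catalan n) := by
    calc (n + 1) * ((n + 2) * catalan (n + 1)) = (n + 1) * ((n + 1 + 1) * catalan (n + 1)) := by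
          ring_nf
      _ = (n + 1) * (n + 1).centralBinom := by rw [h1]
      _ = 2 * (2 * n + 1) * n.centralBinom := h3
      _ = 2 * (2 * n + 1) * ((n + 1) * catalan n) := by rw [h2]
      _ = (n + 1) * (2 * (2 * n + 1) * catalan n) := by ring
  exact Nat.eq_of_mul_eq_mul_left (Nat.succ_pos n) key

/-- Partial sums of `catalan k / 4 ^ k`. -/
lemma sqrtAux_sum_cat (N : ℕ) :
    ∑ k ∈ range N, (catalan k / 4 ^ k : ℝ) = 2 - (2 * N + 2) * (catalan N / 4 ^ N) := by
  induction N with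
  | zero => simp
  | succ N ih =>
    rw [Finset.sum_range_succ, ih]
    have h4 : (4 : ℝ) ^ N ≠ 0 := by positivity
    have hkey : ((N : ℝ) + 2) * catalan (N + 1) = 2 * (2 * N + 1) * catalan N := by
      exact_mod_cast congrArg (Nat.cast : ℕ → ℝ) (sqrtAux_cat_ratio N)
    have : (4 : ℝ) ^ (N + 1) = 4 * 4 ^ N := by ring
    field_simp [this]
    linear_combination (norm := (push_cast; ring)) (2 * (4:ℝ) ^ N) * hkey

/-- Coefficients (absolute values) of the power series of `√(1+z)`. -/
noncomputable def sqrtAuxQ : ℕ → ℝ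
  | 0 => 0
  | (n+1) => catalan n / 2 ^ (2 * n + 1)

lemma sqrtAuxQ_nonneg (n : ℕ) : 0 ≤ sqrtAuxQ n := by
  cases n with
  | zero => simp [sqrtAuxQ]
  | succ n => unfold sqrtAuxQ; positivity

lemma sqrtAuxQ_succ (n : ℕ) : sqrtAuxQ (n + 1) = (catalan n / 4 ^ n : ℝ) / 2 := by
  show (catalan n / 2 ^ (2 * n + 1) : ℝ) = (catalan n / 4 ^ n : ℝ) / 2
  rw [pow_add, pow_mul]
  norm_num [div_div]

lemma sqrtAuxQ_sum_le (N : ℕ) : ∑ k ∈ range N, sqrtAuxQ (k + 1) ≤ 1 := by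
  simp_rw [sqrtAuxQ_succ]
  rw [← Finset.sum_div, sqrtAux_sum_cat]
  have h : 0 ≤ (2 * N + 2) * (catalan N / 4 ^ N : ℝ) := by positivity
  linarith

lemma sqrtAuxQ_le_one (n : ℕ) : sqrtAuxQ n ≤ 1 := by
  cases n with
  | zero => norm_num [sqrtAuxQ]
  | succ n =>
    have h := sqrtAuxQ_sum_le (n + 1)
    have h2 : sqrtAuxQ (n + 1) ≤ ∑ k ∈ range (n + 1), sqrtAuxQ (k + 1) :=
      Finset.single_le_sum (f := fun k => sqrtAuxQ (k + 1))
        (fun i _ => sqrtAuxQ_nonneg (i + 1)) (self_mem_range_succ n)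
    linarith

/-- The convolution identity for `sqrtAuxQ`, coming from the Catalan recursion. -/
lemma sqrtAuxQ_conv (m : ℕ) :
    ∑ k ∈ range (m + 1), sqrtAuxQ (k + 1) * sqrtAuxQ (m + 1 - k) = 2 * sqrtAuxQ (m + 2) := by
  have key : catalan (m + 1) = ∑ k ∈ range (m + 1), catalan k * catalan (m - k) := by
    rw [catalan_succ']
    rw [Finset.Nat.sum_antidiagonal_eq_sum_range_succ (fun x y => catalan x * catalan y) m]
  have step : ∀ k ∈ range (m + 1),
      sqrtAuxQ (k + 1) * sqrtAuxQ (m + 1 - k)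
        = (catalan k * catalan (m - k) : ℝ) / 4 ^ (m + 1) := by
    intro k hk
    have hk' : k ≤ m := by simpa using Nat.lt_succ_iff.mp (Finset.mem_range.mp hk)
    have : m + 1 - k = (m - k) + 1 := by omega
    rw [this, sqrtAuxQ_succ, sqrtAuxQ_succ]
    have h4 : (4 : ℝ) ^ (m + 1) = 4 ^ k * 4 ^ (m - k) * 4 := by
      rw [show m + 1 = k + (m - k) + 1 by omega, pow_add, pow_add, pow_one]
    rw [h4, div_mul_div_comm, div_mul_div_comm]
    ring_nf
  rw [Finset.sum_congr rfl step, ← Finset.sum_div]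
  have hxkey : ((catalan (m+1) : ℝ)) = ∑ k ∈ range (m + 1), (catalan k * catalan (m - k) : ℝ) := by
    rw [key]; push_cast; rfl
  rw [← hxkey, sqrtAuxQ_succ]
  have : (4 : ℝ) ^ (m + 1) = 4 ^ (m + 1) := rfl
  ring

/-- The coefficients of the power series of `√(1+z)`. -/
noncomputable def sqrtAuxA : ℕ → ℂ
  | 0 => 1
  | (n+1) => (-1) ^ n * (sqrtAuxQ (n + 1) : ℝ)

lemma sqrtAuxA_zero : sqrtAuxA 0 = 1 := rfl

lemma sqrtAuxA_succ (n : ℕ) : sqrtAuxA (n + 1) = (-1) ^ n * (sqrtAuxQ (n + 1) : ℝ) := rfl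

lemma sqrtAuxA_one : sqrtAuxA 1 = 1 / 2 := by
  rw [sqrtAuxA_succ]
  norm_num [sqrtAuxQ]

lemma norm_sqrtAuxA_succ (n : ℕ) : ‖sqrtAuxA (n + 1)‖ = sqrtAuxQ (n + 1) := by
  rw [sqrtAuxA_succ, norm_mul, norm_pow, norm_neg, norm_one, one_pow, one_mul,
    Complex.norm_real, Real.norm_of_nonneg (sqrtAuxQ_nonneg _)]

lemma norm_sqrtAuxA_le (n : ℕ) : ‖sqrtAuxA n‖ ≤ 1 := by
  cases n with
  | zero => simp [sqrtAuxA_zero]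
  | succ n => rw [norm_sqrtAuxA_succ]; exact sqrtAuxQ_le_one _

/-- The convolution identity: `(√(1+z))² = 1 + z` at the level of coefficients. -/
lemma sqrtAuxA_conv (n : ℕ) :
    ∑ k ∈ range (n + 1), sqrtAuxA k * sqrtAuxA (n - k) =
      if n ≤ 1 then 1 else 0 := by
  match n with
  | 0 => simp [sqrtAuxA_zero]
  | 1 => norm_num [Finset.sum_range_succ, sqrtAuxA_zero, sqrtAuxA_one]
  | (m+2) =>
    rw [if_neg (by omega)]
    rw [Finset.sum_range_succ, Finset.sum_range_succ']
    have h0 : sqrtAuxA 0 * sqrtAuxA (m + 2 - 0) = sqrtAuxA (m + 2) := by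
      simp [sqrtAuxA_zero]
    have hlast : sqrtAuxA (m + 2) * sqrtAuxA (m + 2 - (m + 2)) = sqrtAuxA (m + 2) := by
      simp [sqrtAuxA_zero]
    rw [h0, hlast]
    have hmid : ∀ k ∈ range (m + 1),
        sqrtAuxA (k + 1) * sqrtAuxA (m + 2 - (k + 1)) =
          (-1) ^ m * ((sqrtAuxQ (k + 1) * sqrtAuxQ (m + 1 - k) : ℝ) : ℂ) := by
      intro k hk
      have hk' : k ≤ m := Nat.lt_succ_iff.mp (Finset.mem_range.mp hk)
      have e1 : m + 2 - (k + 1) = (m - k) + 1 := by omega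
      rw [e1, sqrtAuxA_succ, sqrtAuxA_succ]
      have e2 : m + 1 - k = (m - k) + 1 := by omega
      rw [e2]
      have e3 : ((-1 : ℂ)) ^ k * ((-1 : ℂ)) ^ (m - k) = (-1) ^ m := by
        rw [← pow_add, show k + (m - k) = m by omega]
      push_cast
      calc ((-1:ℂ)) ^ k * (sqrtAuxQ (k+1) : ℂ) * ((-1:ℂ) ^ (m-k) * (sqrtAuxQ (m-k+1) : ℂ))
          = ((-1:ℂ)) ^ k * ((-1:ℂ)) ^ (m - k) * ((sqrtAuxQ (k+1) : ℂ) * (sqrtAuxQ (m-k+1) : ℂ)) := by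
            ring
        _ = (-1) ^ m * ((sqrtAuxQ (k+1) : ℂ) * (sqrtAuxQ (m-k+1) : ℂ)) := by rw [e3]
    rw [Finset.sum_congr rfl hmid, ← Finset.mul_sum]
    have : ∑ k ∈ range (m + 1), ((sqrtAuxQ (k + 1) * sqrtAuxQ (m + 1 - k) : ℝ) : ℂ)
        = ((2 * sqrtAuxQ (m + 2) : ℝ) : ℂ) := by
      rw [← Complex.ofReal_sum]
      norm_cast
      exact sqrtAuxQ_conv m
    rw [this, sqrtAuxA_succ, pow_succ]
    push_cast
    ring

/-- Coefficients of the power series of `1/(√(1+z) - μ)`. -/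
noncomputable def sqrtAuxB (μ : ℂ) : ℕ → ℂ
  | 0 => (1 - μ)⁻¹
  | (n+1) => -(1 - μ)⁻¹ * ∑ k ∈ Finset.range (n + 1),
      sqrtAuxA (k + 1) * sqrtAuxB μ (n - k)
decreasing_by exact Nat.lt_succ_of_le (Nat.sub_le n k)

lemma one_le_norm_one_sub (μ : ℂ) (hμ : μ.re ≤ 0) : 1 ≤ ‖1 - μ‖ := by
  have h : (1 : ℝ) ≤ (1 - μ).re := by
    simp only [Complex.sub_re, Complex.one_re]
    linarith
  calc (1 : ℝ) ≤ (1 - μ).re := h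
    _ ≤ ‖1 - μ‖ := Complex.re_le_norm _
    _ = ‖1 - μ‖ := rfl

lemma norm_sqrtAuxB_le (μ : ℂ) (hμ : μ.re ≤ 0) : ∀ n, ‖sqrtAuxB μ n‖ ≤ 1 := by
  have hinv : ‖(1 - μ)⁻¹‖ ≤ 1 := by
    rw [norm_inv]
    have h1 := one_le_norm_one_sub μ hμ
    exact inv_le_one_of_one_le₀ h1
  intro n
  induction n using Nat.strong_induction_on with
  | _ n ih =>
    match n with
    | 0 => rw [sqrtAuxB]; exact hinv
    | (m+1) =>
      rw [sqrtAuxB]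
      calc ‖-(1 - μ)⁻¹ * ∑ k ∈ Finset.range (m + 1), sqrtAuxA (k + 1) * sqrtAuxB μ (m - k)‖
          = ‖(1 - μ)⁻¹‖ * ‖∑ k ∈ Finset.range (m + 1), sqrtAuxA (k + 1) * sqrtAuxB μ (m - k)‖ := by
            rw [norm_mul, norm_neg]
        _ ≤ 1 * ∑ k ∈ Finset.range (m + 1), sqrtAuxQ (k + 1) := by
            apply mul_le_mul hinv _ (norm_nonneg _) zero_le_one
            calc ‖∑ k ∈ Finset.range (m + 1), sqrtAuxA (k + 1) * sqrtAuxB μ (m - k)‖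
                ≤ ∑ k ∈ Finset.range (m + 1), ‖sqrtAuxA (k + 1) * sqrtAuxB μ (m - k)‖ :=
                  norm_sum_le _ _
              _ ≤ ∑ k ∈ Finset.range (m + 1), sqrtAuxQ (k + 1) := by
                  apply Finset.sum_le_sum
                  intro k hk
                  rw [norm_mul, norm_sqrtAuxA_succ]
                  have hb : ‖sqrtAuxB μ (m - k)‖ ≤ 1 :=
                    ih (m - k) (Nat.lt_succ_of_le (Nat.sub_le m k))
                  calc sqrtAuxQ (k+1) * ‖sqrtAuxB μ (m - k)‖
                      ≤ sqrtAuxQ (k+1) * 1 := by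
                        exact mul_le_mul_of_nonneg_left hb (sqrtAuxQ_nonneg _)
                    _ = sqrtAuxQ (k+1) := mul_one _
        _ ≤ 1 * 1 := by
            apply mul_le_mul_of_nonneg_left (sqrtAuxQ_sum_le _) zero_le_one
        _ = 1 := one_mul 1

lemma sqrtAuxB_conv (μ : ℂ) (hμ : μ.re ≤ 0) (n : ℕ) :
    ∑ k ∈ Finset.range (n + 1),
      (sqrtAuxA k - if k = 0 then μ else 0) * sqrtAuxB μ (n - k) =
      if n = 0 then 1 else 0 := by
  have hne : (1 : ℂ) - μ ≠ 0 := by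
    intro h
    have := one_le_norm_one_sub μ hμ
    rw [h, norm_zero] at this
    linarith
  match n with
  | 0 =>
    rw [if_pos rfl, Finset.sum_range_one, Nat.sub_zero, if_pos rfl, sqrtAuxA_zero, sqrtAuxB]
    exact mul_inv_cancel₀ hne
  | (m+1) =>
    rw [if_neg (Nat.succ_ne_zero m)]
    rw [Finset.sum_range_succ']
    have h0 : (sqrtAuxA 0 - if (0:ℕ) = 0 then μ else 0) * sqrtAuxB μ (m + 1 - 0)
        = (1 - μ) * sqrtAuxB μ (m + 1) := by
      rw [if_pos rfl, sqrtAuxA_zero, Nat.sub_zero]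
    rw [h0]
    have hmid : ∀ k ∈ Finset.range (m + 1),
        (sqrtAuxA (k + 1) - if k + 1 = 0 then μ else 0) * sqrtAuxB μ (m + 1 - (k + 1))
          = sqrtAuxA (k + 1) * sqrtAuxB μ (m - k) := by
      intro k _
      rw [if_neg (Nat.succ_ne_zero k), sub_zero, Nat.succ_sub_succ]
    rw [Finset.sum_congr rfl hmid]
    rw [sqrtAuxB]
    field_simp
    ring

section BanachAlgebra

variable {A : Type*} [NormedRing A] [NormedAlgebra ℂ A] [CompleteSpace A]

set_option linter.unusedSectionVars false

lemma sqrtAux_norm_summable (t : A) {s : ℝ} (hs0 : 0 ≤ s) (hs1 : s < 1)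
    (hbd : ∀ᶠ n in Filter.atTop, ‖t ^ n‖ ≤ s ^ n) (u : ℕ → ℂ) {C : ℝ}
    (hu : ∀ n, ‖u n‖ ≤ C) :
    Summable (fun n => ‖u n • t ^ n‖) := by
  have hC : 0 ≤ C := le_trans (norm_nonneg _) (hu 0)
  have hg : Summable (fun n => C * s ^ n) :=
    (summable_geometric_of_lt_one hs0 hs1).mul_left C
  apply Summable.of_norm_bounded_eventually_nat hg
  filter_upwards [hbd] with n hn
  rw [Real.norm_of_nonneg (norm_nonneg _), norm_smul]
  exact mul_le_mul (hu n) hn (norm_nonneg _) hC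

lemma sqrtAux_summable (t : A) {s : ℝ} (hs0 : 0 ≤ s) (hs1 : s < 1)
    (hbd : ∀ᶠ n in Filter.atTop, ‖t ^ n‖ ≤ s ^ n) (u : ℕ → ℂ) {C : ℝ}
    (hu : ∀ n, ‖u n‖ ≤ C) :
    Summable (fun n => u n • t ^ n) :=
  (sqrtAux_norm_summable t hs0 hs1 hbd u hu).of_norm

/-- Cauchy product in a Banach algebra for series of the form `∑ uₙ • tⁿ`. -/
lemma sqrtAux_tsum_mul_tsum (t : A) {s : ℝ} (hs0 : 0 ≤ s) (hs1 : s < 1)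
    (hbd : ∀ᶠ n in Filter.atTop, ‖t ^ n‖ ≤ s ^ n) (u v : ℕ → ℂ) {C D : ℝ}
    (hu : ∀ n, ‖u n‖ ≤ C) (hv : ∀ n, ‖v n‖ ≤ D) :
    (∑' n, u n • t ^ n) * (∑' n, v n • t ^ n) =
      ∑' n, (∑ k ∈ Finset.range (n + 1), u k * v (n - k)) • t ^ n := by
  rw [tsum_mul_tsum_eq_tsum_sum_range_of_summable_norm
    (sqrtAux_norm_summable t hs0 hs1 hbd u hu) (sqrtAux_norm_summable t hs0 hs1 hbd v hv)]
  congr 1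
  funext n
  rw [Finset.sum_smul]
  apply Finset.sum_congr rfl
  intro k hk
  have hk' : k ≤ n := Nat.lt_succ_iff.mp (Finset.mem_range.mp hk)
  rw [smul_mul_smul_comm, ← pow_add, show k + (n - k) = n by omega]

/-- The sum of a series which vanishes for `n ≥ 2`. -/
lemma sqrtAux_tsum_eq_two (t : A) (w : ℕ → ℂ) (hw : ∀ n, 2 ≤ n → w n = 0) :
    ∑' n, w n • t ^ n = w 0 • (1 : A) + w 1 • t := by
  rw [tsum_eq_sum (s := Finset.range 2) (by
    intro n hn
    rw [hw n (by simp at hn; omega), zero_smul])]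
  rw [Finset.sum_range_succ, Finset.sum_range_one, pow_zero, pow_one]

/-- The series `∑ sqrtAuxA n • tⁿ` minus `μ` is invertible when `Re μ ≤ 0`. -/
lemma sqrtAux_isUnit (t : A) {s : ℝ} (hs0 : 0 ≤ s) (hs1 : s < 1)
    (hbd : ∀ᶠ n in Filter.atTop, ‖t ^ n‖ ≤ s ^ n) (μ : ℂ) (hμ : μ.re ≤ 0) :
    IsUnit (algebraMap ℂ A μ - ∑' n, sqrtAuxA n • t ^ n) := by
  set uA : ℕ → ℂ := fun k => sqrtAuxA k - if k = 0 then μ else 0 with huA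
  have huAbd : ∀ n, ‖uA n‖ ≤ 1 + ‖μ‖ := by
    intro n
    calc ‖uA n‖ ≤ ‖sqrtAuxA n‖ + ‖if n = 0 then μ else 0‖ := norm_sub_le _ _
      _ ≤ 1 + ‖μ‖ := by
          apply add_le_add (norm_sqrtAuxA_le n)
          split
          · exact le_refl _
          · simp
  have hBbd := norm_sqrtAuxB_le μ hμ
  have hAbd := norm_sqrtAuxA_le
  have hdeltabd : ∀ n, ‖(if n = 0 then μ else 0 : ℂ)‖ ≤ ‖μ‖ := by
    intro n; split
    · exact le_refl _
    · simp
  have hdelta : ∑' n, (if n = 0 then μ else 0 : ℂ) • t ^ n = algebraMap ℂ A μ := by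
    rw [tsum_eq_single 0 (by intro n hn; rw [if_neg hn, zero_smul])]
    rw [if_pos rfl, pow_zero, Algebra.algebraMap_eq_smul_one]
  have hsub : ∑' n, uA n • t ^ n = (∑' n, sqrtAuxA n • t ^ n) - algebraMap ℂ A μ := by
    rw [← hdelta, ← Summable.tsum_sub (sqrtAux_summable t hs0 hs1 hbd _ hAbd)
      (sqrtAux_summable t hs0 hs1 hbd _ hdeltabd)]
    apply tsum_congr
    intro n
    rw [huA, sub_smul]
  have hdeltaone : ∑' n, (if n = 0 then (1:ℂ) else 0) • t ^ n = 1 := by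
    rw [sqrtAux_tsum_eq_two t _ (by intro n hn; rw [if_neg (by omega)])]
    simp
  have hmul1 : (∑' n, uA n • t ^ n) * (∑' n, sqrtAuxB μ n • t ^ n) = 1 := by
    rw [sqrtAux_tsum_mul_tsum t hs0 hs1 hbd uA (sqrtAuxB μ) huAbd hBbd]
    rw [show (fun n => (∑ k ∈ Finset.range (n + 1), uA k * sqrtAuxB μ (n - k)) • t ^ n)
        = fun n => (if n = 0 then (1:ℂ) else 0) • t ^ n from
      funext fun n => by rw [sqrtAuxB_conv μ hμ n]]
    exact hdeltaone
  have hmul2 : (∑' n, sqrtAuxB μ n • t ^ n) * (∑' n, uA n • t ^ n) = 1 := by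
    rw [sqrtAux_tsum_mul_tsum t hs0 hs1 hbd (sqrtAuxB μ) uA hBbd huAbd]
    rw [show (fun n => (∑ k ∈ Finset.range (n + 1), sqrtAuxB μ k * uA (n - k)) • t ^ n)
        = fun n => (if n = 0 then (1:ℂ) else 0) • t ^ n from funext fun n => ?_]
    · exact hdeltaone
    have hrefl : ∑ k ∈ Finset.range (n + 1), sqrtAuxB μ k * uA (n - k)
        = ∑ k ∈ Finset.range (n + 1), uA k * sqrtAuxB μ (n - k) := by
      rw [← Finset.sum_range_reflect (fun k => uA k * sqrtAuxB μ (n - k)) (n + 1)]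
      apply Finset.sum_congr rfl
      intro k hk
      have hk' : k ≤ n := Nat.lt_succ_iff.mp (Finset.mem_range.mp hk)
      rw [show n + 1 - 1 - k = n - k from by omega, show n - (n - k) = k from by omega,
        mul_comm]
    rw [hrefl, sqrtAuxB_conv μ hμ n]
  have hunit : IsUnit (∑' n, uA n • t ^ n) := ⟨⟨_, _, hmul1, hmul2⟩, rfl⟩
  rw [show algebraMap ℂ A μ - ∑' n, sqrtAuxA n • t ^ n = -(∑' n, uA n • t ^ n) from by
    rw [hsub, neg_sub]]
  exact hunit.neg

end BanachAlgebra

/-- An element of a unital complex Banach algebra whose spectrum lies in `(0, ∞)` has a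
unique square root with spectrum in `[0, ∞)`; this square root has spectrum in `(0, ∞)`
and lies in the closure of the (non-unital) subalgebra generated by `x`. -/
theorem exists_unique_sqrt_of_spectrum_pos
    {A : Type*} [NormedRing A] [NormedAlgebra ℂ A] [CompleteSpace A]
    (x : A) (hx : ∀ z ∈ spectrum ℂ x, 0 < z.re ∧ z.im = 0) :
    ∃ y : A, y ^ 2 = x ∧ (∀ z ∈ spectrum ℂ y, 0 < z.re ∧ z.im = 0) ∧
      y ∈ closure (NonUnitalAlgebra.adjoin ℂ {x} : Set A) ∧
      ∀ z : A, z ^ 2 = x → (∀ w ∈ spectrum ℂ z, 0 ≤ w.re ∧ w.im = 0) → z = y := by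
  classical
  rcases subsingleton_or_nontrivial A with hA | hA
  · refine ⟨x, Subsingleton.elim _ _, ?_, ?_, fun z _ _ => Subsingleton.elim _ _⟩
    · intro z hz
      rw [spectrum.of_subsingleton] at hz
      exact absurd hz (Set.notMem_empty z)
    · exact subset_closure (NonUnitalAlgebra.self_mem_adjoin_singleton ℂ x)
  -- spectrum data
  have hcpt : IsCompact (spectrum ℂ x) := spectrum.isCompact x
  have hne : (spectrum ℂ x).Nonempty := spectrum.nonempty x
  have hKcpt : IsCompact (Complex.re '' spectrum ℂ x) := hcpt.image Complex.continuous_re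
  have hKne : (Complex.re '' spectrum ℂ x).Nonempty := hne.image _
  set m : ℝ := sInf (Complex.re '' spectrum ℂ x) with hm_def
  set M : ℝ := sSup (Complex.re '' spectrum ℂ x) with hM_def
  obtain ⟨zm, hzm, hzmre⟩ := hKcpt.sInf_mem hKne
  have hm0 : 0 < m := by rw [hm_def, ← hzmre]; exact (hx zm hzm).1
  have hmle : ∀ z ∈ spectrum ℂ x, m ≤ z.re := fun z hz =>
    csInf_le hKcpt.bddBelow ⟨z, hz, rfl⟩
  have hleM : ∀ z ∈ spectrum ℂ x, z.re ≤ M := fun z hz =>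
    le_csSup hKcpt.bddAbove ⟨z, hz, rfl⟩
  have hmM : m ≤ M := by
    rw [hm_def, ← hzmre]
    exact hleM zm hzm
  -- constants
  set c : ℝ := (m + M) / 2 with hc_def
  have hc0 : 0 < c := by rw [hc_def]; linarith
  have hcC : (c : ℂ) ≠ 0 := Complex.ofReal_ne_zero.mpr (ne_of_gt hc0)
  set r : ℝ := (M - m) / (M + m) with hr_def
  have hMm : (0:ℝ) < M + m := by linarith
  have hr0 : 0 ≤ r := div_nonneg (by linarith) (by linarith)
  have hr1 : r < 1 := by rw [hr_def, div_lt_one hMm]; linarith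
  have hrmul : r * (M + m) = M - m := by rw [hr_def]; field_simp
  set t : A := (c : ℂ)⁻¹ • x - 1 with ht_def
  -- bound on the spectrum of t
  have htspec : ∀ μ ∈ spectrum ℂ t, ‖μ‖ ≤ r := by
    intro μ hμ
    have hxspec : ((c : ℂ) * (μ + 1)) ∈ spectrum ℂ x := by
      rw [spectrum.mem_iff] at hμ ⊢
      intro hun
      apply hμ
      have key : algebraMap ℂ A μ - t = (c : ℂ)⁻¹ • (algebraMap ℂ A ((c:ℂ) * (μ + 1)) - x) := by
        rw [smul_sub, Algebra.smul_def, ← map_mul, inv_mul_cancel_left₀ hcC, map_add, map_one,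
          ht_def, Algebra.smul_def]
        abel
      rw [key, Algebra.smul_def]
      exact (((isUnit_iff_ne_zero).2 (inv_ne_zero hcC)).map (algebraMap ℂ A)).mul hun
    have hge := hmle _ hxspec
    have hle := hleM _ hxspec
    have him := (hx _ hxspec).2
    have hμim : μ.im = 0 := by
      have h1 : ((c:ℂ) * (μ + 1)).im = c * μ.im := by
        simp [Complex.mul_im]
      rw [h1] at him
      exact (mul_eq_zero.mp him).resolve_left (ne_of_gt hc0)
    have hμre : ((c:ℂ) * (μ + 1)).re = c * (μ.re + 1) := by
      simp [Complex.mul_re, hμim]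
    rw [hμre] at hge hle
    have hnorm : ‖μ‖ = |μ.re| := by
      have : μ = ((μ.re : ℝ) : ℂ) := Complex.ext rfl (by simp [hμim])
      rw [this]
      simp
    rw [hnorm, abs_le]
    constructor
    · nlinarith
    · nlinarith
  -- spectral radius bound and Gelfand formula
  have hradius : spectralRadius ℂ t ≤ ENNReal.ofReal r := by
    rw [spectralRadius]
    apply iSup₂_le
    intro k hk
    rw [← ENNReal.ofReal_coe_nnreal, coe_nnnorm]
    exact ENNReal.ofReal_le_ofReal (htspec k hk)
  set s : ℝ := (1 + r)/2 with hs_def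
  have hs0 : 0 ≤ s := by rw [hs_def]; linarith
  have hs1 : s < 1 := by rw [hs_def]; linarith
  have hrs : r < s := by rw [hs_def]; linarith
  have hbd : ∀ᶠ n in Filter.atTop, ‖t ^ n‖ ≤ s ^ n := by
    have htend := spectrum.pow_nnnorm_pow_one_div_tendsto_nhds_spectralRadius t
    have hlt : spectralRadius ℂ t < ENNReal.ofReal s :=
      lt_of_le_of_lt hradius ((ENNReal.ofReal_lt_ofReal_iff (by linarith)).mpr hrs)
    have hev := htend.eventually_lt_const hlt
    filter_upwards [hev, Filter.eventually_ge_atTop 1] with n h1 h2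
    have hn0 : (n:ℝ) ≠ 0 := Nat.cast_ne_zero.mpr (by omega)
    have h3 : ((‖t ^ n‖₊ : ENNReal) ^ (1/(n:ℝ))) ^ (n:ℝ) ≤ (ENNReal.ofReal s) ^ (n:ℝ) :=
      ENNReal.rpow_le_rpow h1.le (by positivity)
    have hl : ((‖t ^ n‖₊ : ENNReal) ^ (1/(n:ℝ))) ^ (n:ℝ) = (‖t ^ n‖₊ : ENNReal) := by
      rw [← ENNReal.rpow_mul, one_div, inv_mul_cancel₀ hn0, ENNReal.rpow_one]
    have hr' : (ENNReal.ofReal s) ^ (n:ℝ) = ENNReal.ofReal (s ^ n) := by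
      rw [← Real.rpow_natCast s n, ENNReal.ofReal_rpow_of_nonneg hs0 (by positivity)]
    rw [hl, hr', ← ENNReal.ofReal_coe_nnreal, coe_nnnorm] at h3
    exact (ENNReal.ofReal_le_ofReal_iff (by positivity)).mp h3
  -- the square root
  have hAbd := norm_sqrtAuxA_le
  have hsummable : Summable (fun n => sqrtAuxA n • t ^ n) :=
    sqrtAux_summable t hs0 hs1 hbd sqrtAuxA hAbd
  set S : A := ∑' n, sqrtAuxA n • t ^ n with hS_def
  have hsqrtc0 : 0 < Real.sqrt c := Real.sqrt_pos.mpr hc0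
  have hsqrtcC : ((Real.sqrt c : ℝ) : ℂ) ≠ 0 := Complex.ofReal_ne_zero.mpr (ne_of_gt hsqrtc0)
  set y : A := ((Real.sqrt c : ℝ) : ℂ) • S with hy_def
  have hsq : y ^ 2 = x := by
    have hSS : S * S = 1 + t := by
      rw [hS_def, sqrtAux_tsum_mul_tsum t hs0 hs1 hbd sqrtAuxA sqrtAuxA hAbd hAbd]
      rw [show (fun n => (∑ k ∈ Finset.range (n+1), sqrtAuxA k * sqrtAuxA (n-k)) • t ^ n)
          = fun n => ((if n ≤ 1 then 1 else 0 : ℂ)) • t ^ n from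
        funext fun n => by rw [sqrtAuxA_conv n]]
      rw [sqrtAux_tsum_eq_two t _ (fun n hn => by rw [if_neg (by omega)])]
      norm_num
    have hct : (c : ℂ) • t = x - (c : ℂ) • (1:A) := by
      rw [ht_def, smul_sub, smul_inv_smul₀ hcC]
    calc y ^ 2 = (((Real.sqrt c : ℝ) : ℂ))^2 • (S * S) := by rw [hy_def, smul_pow, pow_two S]
      _ = (c : ℂ) • ((1:A) + t) := by
          rw [hSS, ← Complex.ofReal_pow, Real.sq_sqrt hc0.le]
      _ = x := by rw [smul_add, hct]; abel
  -- invertibility off the right half plane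
  have hy_unit : ∀ lam : ℂ, lam.re ≤ 0 → IsUnit (algebraMap ℂ A lam - y) := by
    intro lam hlam
    set μ : ℂ := lam / ((Real.sqrt c : ℝ) : ℂ) with hμ_def
    have hμre : μ.re ≤ 0 := by
      rw [hμ_def, Complex.div_ofReal_re]
      exact div_nonpos_of_nonpos_of_nonneg hlam hsqrtc0.le
    have hkey : algebraMap ℂ A lam - y
        = ((Real.sqrt c : ℝ) : ℂ) • (algebraMap ℂ A μ - S) := by
      rw [smul_sub, hy_def, Algebra.smul_def, Algebra.smul_def, ← map_mul, hμ_def,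
        mul_div_cancel₀ _ hsqrtcC]
    rw [hkey, Algebra.smul_def]
    exact (((isUnit_iff_ne_zero).2 hsqrtcC).map (algebraMap ℂ A)).mul
      (sqrtAux_isUnit t hs0 hs1 hbd μ hμre)
  -- the spectrum of y
  have hy_spec : ∀ lam ∈ spectrum ℂ y, 0 < lam.re ∧ lam.im = 0 := by
    intro lam hlam
    have hre : 0 < lam.re := by
      by_contra h
      push_neg at h
      exact (spectrum.notMem_iff.mpr (hy_unit lam h)) hlam
    refine ⟨hre, ?_⟩
    have hsq_mem : lam ^ 2 ∈ spectrum ℂ (y ^ 2) := by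
      rw [spectrum.map_pow]
      exact ⟨lam, hlam, rfl⟩
    rw [hsq] at hsq_mem
    have him := (hx _ hsq_mem).2
    rw [sq, Complex.mul_im] at him
    have h2 : lam.im * (2 * lam.re) = 0 := by linarith
    rcases mul_eq_zero.mp h2 with h | h
    · exact h
    · linarith
  -- membership in the closure of the non-unital subalgebra
  have hclos : y ∈ closure (NonUnitalAlgebra.adjoin ℂ {x} : Set A) := by
    set C := NonUnitalAlgebra.adjoin ℂ ({x} : Set A) with hC_def
    have hxC : x ∈ C := NonUnitalAlgebra.self_mem_adjoin_singleton ℂ x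
    set Cl := C.topologicalClosure with hCl_def
    have humem : (c : ℂ)⁻¹ • x ∈ C := SMulMemClass.smul_mem _ hxC
    have hmulmem : ∀ (k : ℕ) (a : A), a ∈ C → (1 - (c : ℂ)⁻¹ • x) ^ k * a ∈ C := by
      intro k
      induction k with
      | zero => intro a ha; simpa using ha
      | succ k ih =>
        intro a ha
        have h2 : (1 - (c : ℂ)⁻¹ • x) * a ∈ C := by
          rw [sub_mul, one_mul]
          exact sub_mem ha (mul_mem humem ha)
        rw [pow_succ, mul_assoc]
        exact ih _ h2
    have honeC : ∀ k : ℕ, (1:A) - (1 - (c : ℂ)⁻¹ • x) ^ k ∈ C := by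
      intro k
      induction k with
      | zero => simpa using zero_mem C
      | succ k ih =>
        have key : (1:A) - (1 - (c : ℂ)⁻¹ • x) ^ (k+1)
            = ((1:A) - (1 - (c : ℂ)⁻¹ • x) ^ k) + (1 - (c : ℂ)⁻¹ • x) ^ k * ((c : ℂ)⁻¹ • x) := by
          rw [pow_succ, mul_sub, mul_one]
          abel
        rw [key]
        exact add_mem ih (hmulmem k _ humem)
    have hneg : (1 : A) - (c:ℂ)⁻¹ • x = -t := by rw [ht_def, neg_sub]
    have hone : (1:A) ∈ Cl := by
      have h0 : Filter.Tendsto (fun k : ℕ => (1 - (c : ℂ)⁻¹ • x) ^ k) Filter.atTop (𝓝 (0:A)) := by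
        apply squeeze_zero_norm' ?_ (tendsto_pow_atTop_nhds_zero_of_lt_one hs0 hs1)
        filter_upwards [hbd] with n hn
        rw [hneg]
        rcases Nat.even_or_odd n with he | ho
        · rw [he.neg_pow]; exact hn
        · rw [ho.neg_pow, norm_neg]; exact hn
      have htendsto : Filter.Tendsto (fun k : ℕ => (1:A) - (1 - (c : ℂ)⁻¹ • x) ^ k)
          Filter.atTop (𝓝 (1:A)) := by
        simpa using (tendsto_const_nhds (x := (1:A)) (f := Filter.atTop)).sub h0
      exact mem_closure_of_tendsto htendsto (Filter.Eventually.of_forall honeC)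
    have hxCl : x ∈ Cl := subset_closure hxC
    have hadj : ∀ a ∈ Algebra.adjoin ℂ ({x} : Set A), a ∈ Cl := by
      intro a ha
      induction ha using Algebra.adjoin_induction with
      | mem z hz => rw [Set.mem_singleton_iff] at hz; exact hz ▸ hxCl
      | algebraMap r =>
        rw [Algebra.algebraMap_eq_smul_one]
        exact SMulMemClass.smul_mem r hone
      | add u v hu hv hu' hv' => exact add_mem hu' hv'
      | mul u v hu hv hu' hv' => exact mul_mem hu' hv'
    have htadj : t ∈ Algebra.adjoin ℂ ({x} : Set A) := by
      rw [ht_def]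
      exact sub_mem (SMulMemClass.smul_mem _ (Algebra.subset_adjoin (Set.mem_singleton x)))
        (one_mem _)
    have hsum_mem : ∀ N : ℕ, (∑ i ∈ Finset.range N, sqrtAuxA i • t ^ i) ∈ Cl := fun N =>
      sum_mem fun i _ => SMulMemClass.smul_mem _ (hadj _ (pow_mem htadj i))
    have hSCl' : S ∈ closure (Cl : Set A) :=
      mem_closure_of_tendsto hsummable.hasSum.tendsto_sum_nat
        (Filter.Eventually.of_forall fun N => (hsum_mem N : _ ∈ (Cl : Set A)))
    have hSCl : S ∈ Cl := by
      rwa [C.isClosed_topologicalClosure.closure_eq] at hSCl'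
    exact SMulMemClass.smul_mem _ hSCl
  refine ⟨y, hsq, hy_spec, hclos, ?_⟩
  -- uniqueness
  intro z hz2 hzspec
  have hzx : z * x = x * z := by rw [← hz2, sq, ← mul_assoc, mul_assoc]
  have hczt : Commute z t := by
    rw [ht_def]
    show z * _ = _ * z
    rw [mul_sub, sub_mul, mul_one, one_mul, mul_smul_comm, smul_mul_assoc, hzx]
  have hzS : z * S = S * z := by
    have h1 : HasSum (fun n => z * (sqrtAuxA n • t^n)) (z * S) := hsummable.hasSum.mul_left z
    have h2 : HasSum (fun n => (sqrtAuxA n • t^n) * z) (S * z) := hsummable.hasSum.mul_right z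
    have h3 : (fun n => z * (sqrtAuxA n • t^n)) = (fun n => (sqrtAuxA n • t^n) * z) := by
      funext n
      rw [mul_smul_comm, smul_mul_assoc, (hczt.pow_right n).eq]
    rw [h3] at h1
    exact h1.unique h2
  have hzy : z * y = y * z := by rw [hy_def, mul_smul_comm, smul_mul_assoc, hzS]
  have hyy : y * y = x := by rw [← sq, hsq]
  have hzz : z * z = x := by rw [← sq, hz2]
  have hfac : (y - z) * (y + z) = 0 := by
    rw [sub_mul, mul_add, mul_add, ← hzy, hyy, hzz]
    abel
  have hyz_unit : IsUnit (y + z) := by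
    by_contra hnu
    set Sset : Set A := {y, z} with hSset_def
    set B := Subalgebra.centralizer ℂ (Set.centralizer Sset) with hB_def
    have hyB : y ∈ B := by
      rw [hB_def, Subalgebra.mem_centralizer_iff]
      intro g hg
      exact (hg y (by simp [hSset_def])).symm
    have hzB : z ∈ B := by
      rw [hB_def, Subalgebra.mem_centralizer_iff]
      intro g hg
      exact (hg z (by simp [hSset_def])).symm
    have hyzB : y + z ∈ B := add_mem hyB hzB
    have hBmem : ∀ a, a ∈ B ↔ ∀ g ∈ Set.centralizer Sset, g * a = a * g := by
      intro a
      rw [hB_def, Subalgebra.mem_centralizer_iff]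
    have hBcomm : ∀ a b : B, a * b = b * a := by
      rintro ⟨a, ha⟩ ⟨b, hb⟩
      apply Subtype.ext
      show a * b = b * a
      have hcomm : ∀ u ∈ Sset, ∀ v ∈ Sset, u * v = v * u := by
        intro u hu v hv
        rcases hu with rfl | hu <;> rcases hv with rfl | hv
        · rfl
        · rw [Set.mem_singleton_iff] at hv; rw [hv, ← hzy]
        · rw [Set.mem_singleton_iff] at hu; rw [hu, hzy]
        · rw [Set.mem_singleton_iff] at hu hv; rw [hu, hv]
      have ha' : a ∈ Sset.centralizer.centralizer := fun g hg => hBmem a |>.mp ha g hg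
      have hb' : b ∈ Sset.centralizer.centralizer := fun g hg => hBmem b |>.mp hb g hg
      exact Set.centralizer_centralizer_comm_of_comm hcomm a ha' b hb'
    have hBclosed : IsClosed (B : Set A) := by
      have hBeq : (B : Set A) = ⋂ g ∈ Set.centralizer Sset, {a : A | g * a = a * g} := by
        ext a
        simp only [Set.mem_iInter, Set.mem_setOf_eq, SetLike.mem_coe]
        exact hBmem a
      rw [hBeq]
      exact isClosed_biInter fun g _ =>
        isClosed_eq (continuous_const.mul continuous_id) (continuous_id.mul continuous_const)
    letI : CompleteSpace B := hBclosed.completeSpace_coe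
    letI : NormedCommRing B := { (inferInstance : NormedRing B) with mul_comm := hBcomm }
    have hfull : ∀ (a : A) (ha : a ∈ B) (ν : ℂ),
        ν ∈ spectrum ℂ (⟨a, ha⟩ : B) → ν ∈ spectrum ℂ a := by
      intro a ha ν hν
      rw [spectrum.mem_iff] at hν ⊢
      intro hun
      apply hν
      obtain ⟨u, hu⟩ := hun
      have hinvB : (↑u⁻¹ : A) ∈ B := by
        rw [hBmem]
        intro g hg
        have hga : Commute g a := (hBmem a).mp ha g hg
        have hgu : Commute g (↑u : A) := by
          rw [hu]
          have hg1 : Commute g (algebraMap ℂ A ν) := (Algebra.commutes ν g).symm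
          exact hg1.sub_right hga
        exact hgu.units_inv_right.eq
      refine ⟨⟨algebraMap ℂ B ν - ⟨a, ha⟩, ⟨(↑u⁻¹ : A), hinvB⟩, ?_, ?_⟩, rfl⟩
      · apply Subtype.ext
        show ((algebraMap ℂ B ν - ⟨a, ha⟩ : B) : A) * (↑u⁻¹ : A) = 1
        have : ((algebraMap ℂ B ν - ⟨a, ha⟩ : B) : A) = algebraMap ℂ A ν - a := by
          push_cast [Subalgebra.coe_algebraMap]
          rfl
        rw [this, ← hu, u.mul_inv]
      · apply Subtype.ext
        show (↑u⁻¹ : A) * ((algebraMap ℂ B ν - ⟨a, ha⟩ : B) : A) = 1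
        have : ((algebraMap ℂ B ν - ⟨a, ha⟩ : B) : A) = algebraMap ℂ A ν - a := by
          push_cast [Subalgebra.coe_algebraMap]
          rfl
        rw [this, ← hu, u.inv_mul]
    have hnuB : ¬ IsUnit (⟨y + z, hyzB⟩ : B) := by
      intro h
      exact hnu (h.map B.val)
    obtain ⟨φ, hφ⟩ := WeakDual.CharacterSpace.exists_apply_eq_zero hnuB
    have hφy : φ ⟨y, hyB⟩ ∈ spectrum ℂ (⟨y, hyB⟩ : B) := AlgHom.apply_mem_spectrum φ _
    have hφz : φ ⟨z, hzB⟩ ∈ spectrum ℂ (⟨z, hzB⟩ : B) := AlgHom.apply_mem_spectrum φ _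
    have h1 := hy_spec _ (hfull y hyB _ hφy)
    have h2 := hzspec _ (hfull z hzB _ hφz)
    have hsum0 : φ ⟨y, hyB⟩ + φ ⟨z, hzB⟩ = 0 := by
      rw [← map_add]
      have : (⟨y, hyB⟩ + ⟨z, hzB⟩ : B) = ⟨y + z, hyzB⟩ := rfl
      rw [this, hφ]
    have hre0 := congrArg Complex.re hsum0
    rw [Complex.add_re, Complex.zero_re] at hre0
    linarith [h1.1, h2.1]
  obtain ⟨u, hu⟩ := hyz_unit
  have hyz0 : y - z = 0 := by
    have h2 : (y - z) * ((y + z) * (↑u⁻¹ : A)) = 0 := by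
      rw [← mul_assoc, hfac, zero_mul]
    rw [← hu, u.mul_inv, mul_one] at h2
    exact h2
  exact (sub_eq_zero.mp hyz0).symm
end

section
/- Let A be a unital complex Banach algebra and let B be a closed subalgebra of A containing the unit of A. Let b ∈ B be such that the spectrum sp_A(b) does not separate the complex plane (i.e. ℂ \ sp_A(b) is connected). Then sp_B(b) = sp_A(b). -/
/-- If `B` is a closed unital subalgebra of a unital complex Banach algebra `A` and `b ∈ B`
has a spectrum (relative to `A`) which does not separate the complex plane, then the
spectra of `b` relative to `B` and relative to `A` coincide. -/
theorem spectrum_subalgebra_eq_of_compl_connected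
    {A : Type*} [NormedRing A] [NormedAlgebra ℂ A] [CompleteSpace A]
    (B : Subalgebra ℂ A) (hB : IsClosed (B : Set A)) (b : B)
    (hconn : IsConnected ((spectrum ℂ (b : A))ᶜ)) :
    spectrum ℂ b = spectrum ℂ (b : A) := by
  have : IsClosed (B : Set A) := hB
  exact Subalgebra.spectrum_eq_of_isPreconnected_compl B b hconn.isPreconnected
end

section
/- A unital Banach *-algebra A is Hermitian if and only if the spectrum of every unitary element of A is contained in the unit circle {z ∈ ℂ : |z| = 1}. -/
open Complex

private lemma herm_aux_norm_one {l : ℂ} (hl0 : l ≠ 0)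
    (him : (l + l⁻¹).im = 0) (hre : (l - l⁻¹).re = 0) : ‖l‖ = 1 := by
  have hn0 : (0:ℝ) < normSq l := Complex.normSq_pos.mpr hl0
  rw [Complex.add_im, Complex.inv_im] at him
  rw [Complex.sub_re, Complex.inv_re] at hre
  have e1 : l.im * (normSq l - 1) = 0 := by field_simp at him; nlinarith [him]
  have e2 : l.re * (normSq l - 1) = 0 := by field_simp at hre; nlinarith [hre]
  have hsq : normSq l = 1 := by
    by_contra h
    have h' : normSq l - 1 ≠ 0 := sub_ne_zero.mpr h
    have hi : l.im = 0 := by rcases mul_eq_zero.mp e1 with h''|h'' <;> [exact h''; exact absurd h'' h']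
    have hr : l.re = 0 := by rcases mul_eq_zero.mp e2 with h''|h'' <;> [exact h''; exact absurd h'' h']
    exact hl0 (Complex.ext hr hi)
  rw [Complex.norm_def, hsq, Real.sqrt_one]

/-- A unital Banach `*`-algebra is Hermitian (every self-adjoint element has real spectrum)
if and only if the spectrum of every unitary element is contained in the unit circle. -/
theorem hermitian_iff_spectrum_unitary_subset_circle
    {A : Type*} [NormedRing A] [NormedAlgebra ℂ A] [CompleteSpace A]
    [StarRing A] [StarModule ℂ A] :
    (∀ a : A, IsSelfAdjoint a → ∀ z ∈ spectrum ℂ a, z.im = 0) ↔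
      (∀ u : A, u ∈ unitary A → ∀ z ∈ spectrum ℂ u, ‖z‖ = 1) := by
  constructor
  · -- Hermitian ⇒ unitary spectra lie on the circle
    intro H u hu l hl
    obtain ⟨hvu, huv⟩ := Unitary.mem_iff.mp hu
    set v := star u with hv
    have huu : IsUnit u := ⟨⟨u, v, huv, hvu⟩, rfl⟩
    have hl0 : l ≠ 0 := by rintro rfl; exact spectrum.zero_notMem ℂ huu hl
    have hnu : ¬ IsUnit (algebraMap ℂ A l - u) := spectrum.mem_iff.mp hl
    have hee' : algebraMap ℂ A l * algebraMap ℂ A l⁻¹ = 1 := by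
      rw [← map_mul, mul_inv_cancel₀ hl0, map_one]
    set e : A := algebraMap ℂ A l with he
    set e' : A := algebraMap ℂ A l⁻¹ with he'
    have hce : Commute e u := Algebra.commutes l u
    have hce' : u * e' = e' * u := (Algebra.commutes l⁻¹ u).symm
    have heunit : IsUnit (e * u) := ((Ne.isUnit hl0).map (algebraMap ℂ A)).mul huu
    have hcomm : Commute (e * u - 1) (e - u) :=
      (((Commute.refl e).mul_left hce.symm).sub_right
        (hce.mul_left (Commute.refl u))).sub_left (Commute.one_left _)
    -- claim A : l + l⁻¹ ∈ spectrum (u + v)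
    have hA : (l + l⁻¹) ∈ spectrum ℂ (u + v) := by
      rw [spectrum.mem_iff]
      intro hX
      rw [map_add] at hX
      have heqA : (e * u - 1) * (e - u) = (e * u) * ((e + e') - (u + v)) := by
        simp only [mul_sub, sub_mul, mul_add, add_mul, one_mul]
        rw [mul_assoc e u e', hce', ← mul_assoc e e', hee', one_mul,
          mul_assoc e u v, huv, mul_one]
        abel
      have hX' : IsUnit ((e * u - 1) * (e - u)) := heqA ▸ heunit.mul hX
      exact hnu (hcomm.isUnit_mul_iff.mp hX').2
    -- claim B : l - l⁻¹ ∈ spectrum (u - v)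
    have hB : (l - l⁻¹) ∈ spectrum ℂ (u - v) := by
      rw [spectrum.mem_iff]
      intro hX
      rw [map_sub] at hX
      have heqB : (e * u + 1) * (e - u) = (e * u) * ((e - e') - (u - v)) := by
        simp only [mul_sub, sub_mul, mul_add, add_mul, one_mul]
        rw [mul_assoc e u e', hce', ← mul_assoc e e', hee', one_mul,
          mul_assoc e u v, huv, mul_one]
        abel
      have hcomm' : Commute (e * u + 1) (e - u) :=
        (((Commute.refl e).mul_left hce.symm).sub_right
          (hce.mul_left (Commute.refl u))).add_left (Commute.one_left _)
      have hX' : IsUnit ((e * u + 1) * (e - u)) := heqB ▸ heunit.mul hX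
      exact hnu (hcomm'.isUnit_mul_iff.mp hX').2
    have hsa : IsSelfAdjoint (u + v) := by
      rw [IsSelfAdjoint, star_add, hv, star_star, add_comm]
    have him : (l + l⁻¹).im = 0 := H _ hsa _ hA
    have hsb : IsSelfAdjoint (Complex.I • (u - v)) := by
      rw [IsSelfAdjoint, star_smul, star_sub, hv, star_star, Complex.star_def, Complex.conj_I,
        neg_smul, smul_sub, smul_sub, neg_sub]
    have hBmem : Complex.I * (l - l⁻¹) ∈ spectrum ℂ (Complex.I • (u - v)) := by
      have hs := spectrum.unit_smul_eq_smul (u - v) (Units.mk0 Complex.I Complex.I_ne_zero)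
      have : (Units.mk0 Complex.I Complex.I_ne_zero) • (u - v) = Complex.I • (u - v) := rfl
      rw [this] at hs
      rw [hs]
      exact ⟨l - l⁻¹, hB, rfl⟩
    have hre : (l - l⁻¹).re = 0 := by
      have := H _ hsb _ hBmem
      simpa [Complex.mul_im] using this
    exact herm_aux_norm_one hl0 him hre
  · -- spectra of unitaries on circle ⇒ Hermitian
    intro H a ha l hl
    set t : ℝ := ‖a‖ * ‖(1:A)‖ + 1 with ht
    have ht0 : 0 < t := by positivity
    have hm1 : ((t:ℂ) * I) ∉ spectrum ℂ a := by
      intro hmem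
      have hb := spectrum.norm_le_norm_mul_of_mem hmem
      rw [norm_mul, Complex.norm_I, mul_one, Complex.norm_real, Real.norm_eq_abs,
        abs_of_pos ht0] at hb
      linarith
    have hm2 : (-((t:ℂ) * I)) ∉ spectrum ℂ a := by
      intro hmem
      have hb := spectrum.norm_le_norm_mul_of_mem hmem
      rw [norm_neg, norm_mul, Complex.norm_I, mul_one, Complex.norm_real, Real.norm_eq_abs,
        abs_of_pos ht0] at hb
      linarith
    have h1 : IsUnit (algebraMap ℂ A ((t:ℂ)*I) - a) := spectrum.notMem_iff.mp hm1
    have h2 : IsUnit (algebraMap ℂ A (-((t:ℂ)*I)) - a) := spectrum.notMem_iff.mp hm2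
    have hxy : Commute (algebraMap ℂ A ((t:ℂ)*I)) (algebraMap ℂ A (-((t:ℂ)*I))) :=
      Algebra.commutes _ _
    have hxa : Commute (algebraMap ℂ A ((t:ℂ)*I)) a := Algebra.commutes _ _
    have hay : Commute (algebraMap ℂ A (-((t:ℂ)*I))) a := Algebra.commutes _ _
    have hcomm : Commute (algebraMap ℂ A ((t:ℂ)*I) - a) (algebraMap ℂ A (-((t:ℂ)*I)) - a) :=
      (hxy.sub_right hxa).sub_left (hay.symm.sub_right (Commute.refl a))
    have hstar1 : star (algebraMap ℂ A ((t:ℂ)*I) - a) = algebraMap ℂ A (-((t:ℂ)*I)) - a := by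
      have hc : star ((t:ℂ)*I) = -((t:ℂ)*I) := by
        simp [Complex.star_def, Complex.conj_I, mul_neg]
      rw [star_sub, ha.star_eq, ← algebraMap_star_comm, hc]
    have hw : star h1.unit = h2.unit :=
      Units.ext (by rw [Units.coe_star, h1.unit_spec, h2.unit_spec, hstar1])
    have hw2 : star h2.unit = h1.unit := by rw [← hw, star_star]
    have hcu : h2.unit * h1.unit = h1.unit * h2.unit :=
      Units.ext (by simp only [Units.val_mul, h1.unit_spec, h2.unit_spec]; exact hcomm.symm)
    have hcu' : h2.unit⁻¹ * h1.unit⁻¹ = h1.unit⁻¹ * h2.unit⁻¹ := by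
      rw [← mul_inv_rev, ← mul_inv_rev, hcu]
    set u : A := ((h1.unit * h2.unit⁻¹ : Aˣ) : A) with hudef
    have hsu : star (h1.unit * h2.unit⁻¹) = h1.unit⁻¹ * h2.unit := by
      rw [star_mul, star_inv, hw, hw2]
    have humem : u ∈ unitary A := by
      rw [Unitary.mem_iff]
      constructor
      · rw [hudef, ← Units.coe_star, hsu, ← Units.val_mul]
        rw [show (h1.unit⁻¹ * h2.unit) * (h1.unit * h2.unit⁻¹) = 1 by
          rw [mul_assoc, ← mul_assoc h2.unit, hcu]; group]
        exact Units.val_one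
      · rw [hudef, ← Units.coe_star, hsu, ← Units.val_mul]
        rw [show (h1.unit * h2.unit⁻¹) * (h1.unit⁻¹ * h2.unit) = 1 by
          rw [mul_assoc, ← mul_assoc h2.unit⁻¹, hcu']; group]
        exact Units.val_one
    -- the Cayley transform point
    have hne2 : l + (t:ℂ)*I ≠ 0 := by
      intro h
      exact hm2 ((eq_neg_of_add_eq_zero_left h) ▸ hl)
    set μ : ℂ := (l - (t:ℂ)*I) / (l + (t:ℂ)*I) with hμ
    have h1μ : (1:ℂ) - μ ≠ 0 := by
      rw [hμ, sub_ne_zero]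
      intro h
      have h' : l - (t:ℂ)*I = l + (t:ℂ)*I := (div_eq_one_iff_eq hne2).mp h.symm
      have h0 : ((t:ℂ)*I) = 0 := by linear_combination (-1/2 : ℂ) * h'
      rcases mul_eq_zero.mp h0 with h''|h''
      · rw [Complex.ofReal_eq_zero] at h''; linarith
      · exact I_ne_zero h''
    have hsc : ((1:ℂ) - μ) * l = (t:ℂ)*I - μ * (-((t:ℂ)*I)) := by
      rw [hμ]; field_simp; ring
    have hkey : (algebraMap ℂ A ((t:ℂ)*I) - a) - algebraMap ℂ A μ * (algebraMap ℂ A (-((t:ℂ)*I)) - a)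
        = algebraMap ℂ A (1-μ) * (algebraMap ℂ A l - a) := by
      rw [mul_sub (algebraMap ℂ A (1-μ)), ← map_mul, hsc, mul_sub (algebraMap ℂ A μ), ← map_mul,
        map_sub, map_sub, map_one, sub_mul, one_mul]
      abel
    have hfact : u - algebraMap ℂ A μ
        = algebraMap ℂ A (1-μ) * ((algebraMap ℂ A l - a) * ↑h2.unit⁻¹) := by
      have h' : u - algebraMap ℂ A μ
          = ((↑h1.unit : A) - algebraMap ℂ A μ * ↑h2.unit) * ↑h2.unit⁻¹ := by
        rw [sub_mul, mul_assoc, Units.mul_inv, mul_one, hudef, Units.val_mul]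
      rw [h', h1.unit_spec, h2.unit_spec, hkey, mul_assoc]
    have hμmem : μ ∈ spectrum ℂ u := by
      rw [spectrum.mem_iff]
      intro hU
      have hU2 : IsUnit (u - algebraMap ℂ A μ) := by rw [← neg_sub]; exact hU.neg
      rw [hfact] at hU2
      have hfl : algebraMap ℂ A (1-μ)⁻¹
          * ((algebraMap ℂ A (1-μ) * ((algebraMap ℂ A l - a) * ↑h2.unit⁻¹)) * ↑h2.unit)
          = algebraMap ℂ A l - a := by
        rw [mul_assoc (algebraMap ℂ A (1-μ)), mul_assoc (algebraMap ℂ A l - a),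
          Units.inv_mul, mul_one, ← mul_assoc, ← map_mul, inv_mul_cancel₀ h1μ, map_one, one_mul]
      have : IsUnit (algebraMap ℂ A l - a) := by
        rw [← hfl]
        exact (((inv_ne_zero h1μ).isUnit).map (algebraMap ℂ A)).mul (hU2.mul h2.unit.isUnit)
      exact spectrum.mem_iff.mp hl this
    have hnorm : ‖μ‖ = 1 := H u humem μ hμmem
    rw [hμ, norm_div] at hnorm
    have hne : ‖l + (t:ℂ)*I‖ ≠ 0 := norm_ne_zero_iff.mpr hne2
    have heq : ‖l - (t:ℂ)*I‖ = ‖l + (t:ℂ)*I‖ := by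
      rw [div_eq_one_iff_eq hne] at hnorm; exact hnorm
    have hsq : Complex.normSq (l - (t:ℂ)*I) = Complex.normSq (l + (t:ℂ)*I) := by
      rw [← Complex.sq_norm, ← Complex.sq_norm, heq]
    simp only [Complex.normSq_apply, Complex.sub_re, Complex.sub_im, Complex.add_re,
      Complex.add_im, Complex.mul_re, Complex.mul_im, Complex.I_re, Complex.I_im,
      Complex.ofReal_re, Complex.ofReal_im] at hsq
    have : l.im * t = 0 := by nlinarith [hsq]
    rcases mul_eq_zero.mp this with h|h
    · exact h
    · exact absurd h (ne_of_gt ht0)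
end

section
/- Let A be a unital Banach *-algebra and let B be a norm-closed *-subalgebra of A containing the unit of A. Assume B is Hermitian (every Hermitian element of B has real spectrum relative to B). Then for every b ∈ B one has sp_B(b) = sp_A(b). -/
open Set

/-- A subset of `ℂ` contained in the real axis has empty interior. -/
lemma interior_eq_empty_of_im_eq_zero {s : Set ℂ} (hs : ∀ z ∈ s, z.im = 0) :
    interior s = ∅ := by
  rw [eq_empty_iff_forall_notMem]
  intro z hz
  obtain ⟨ε, hε, hball⟩ := Metric.isOpen_iff.mp isOpen_interior z hz
  have hmem : z + (ε / 2) * Complex.I ∈ Metric.ball z ε := by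
    rw [Metric.mem_ball, dist_eq_norm,
      show z + (ε : ℂ)/2 * Complex.I - z = ((ε/2 : ℝ) : ℂ) * Complex.I by push_cast; ring]
    rw [norm_mul, Complex.norm_I, mul_one, Complex.norm_real, Real.norm_eq_abs,
      abs_of_pos (by linarith)]
    linarith
  have := hs _ (interior_subset (hball hmem))
  have hz0 := hs _ (interior_subset hz)
  simp [Complex.add_im, hz0] at this
  linarith

/-- For a self-adjoint element of a closed star-subalgebra with real spectrum, if it is
invertible in the ambient algebra, it is invertible in the subalgebra. -/
lemma spectrum_subset_of_selfAdjoint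
    {A : Type*} [NormedRing A] [NormedAlgebra ℂ A] [CompleteSpace A]
    [StarRing A] [StarModule ℂ A]
    (S : StarSubalgebra ℂ A) (hS : IsClosed (S : Set A))
    (h : S) (hreal : ∀ z ∈ spectrum ℂ h, z.im = 0) :
    spectrum ℂ h ⊆ spectrum ℂ (h : A) := by
  have : CompleteSpace S := hS.completeSpace_coe
  have hint : interior (spectrum ℂ h) = ∅ := interior_eq_empty_of_im_eq_zero hreal
  have hfr : frontier (spectrum ℂ h) = spectrum ℂ h := by
    rw [frontier, hint, (spectrum.isClosed _).closure_eq, diff_empty]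
  calc spectrum ℂ h = frontier (spectrum ℂ h) := hfr.symm
    _ ⊆ spectrum ℂ (h : A) := Subalgebra.frontier_spectrum (hS := hS) S h

/-- If `S` is a Hermitian closed unital `*`-subalgebra of a unital Banach `*`-algebra `A`,
then for every `b ∈ S` the spectrum of `b` relative to `S` equals the spectrum of `b`
relative to `A`. -/
theorem spectrum_starSubalgebra_eq_of_hermitian
    {A : Type*} [NormedRing A] [NormedAlgebra ℂ A] [CompleteSpace A]
    [StarRing A] [StarModule ℂ A]
    (S : StarSubalgebra ℂ A) (hS : IsClosed (S : Set A))
    (hHerm : ∀ b : S, IsSelfAdjoint b → ∀ z ∈ spectrum ℂ b, z.im = 0)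
    (b : S) : spectrum ℂ b = spectrum ℂ (b : A) := by
  refine Set.Subset.antisymm ?_ (spectrum.subset_subalgebra b)
  -- key: any element of S invertible in A whose star-products work out is invertible in S
  have key : ∀ h : S, IsSelfAdjoint h → IsUnit (h : A) → IsUnit h := by
    intro h hsa hu
    have := spectrum_subset_of_selfAdjoint S hS h (hHerm h hsa)
    by_contra hnot
    exact (spectrum.zero_mem_iff ℂ).mp (this ((spectrum.zero_mem_iff ℂ).mpr hnot)) hu
  intro z hz
  by_contra hzA
  rw [spectrum.notMem_iff] at hzA
  set c : S := algebraMap ℂ S z - b with hc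
  have hcA : (c : A) = algebraMap ℂ A z - (b : A) := by
    simp [hc]
  have hcu : IsUnit (c : A) := hcA ▸ hzA
  have h1 : IsUnit (star c * c) :=
    key _ (IsSelfAdjoint.star_mul_self c) (by
      push_cast
      exact (hcu.star.mul hcu))
  have h2 : IsUnit (c * star c) :=
    key _ (IsSelfAdjoint.mul_star_self c) (by
      push_cast
      exact (hcu.mul hcu.star))
  obtain ⟨u, hu⟩ := h1
  obtain ⟨v, hv⟩ := h2
  -- left inverse: (↑u⁻¹ * star c) * c = 1 ; right inverse: c * (star c * ↑v⁻¹) = 1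
  have hleft : ((↑u⁻¹ : S) * star c) * c = 1 := by
    rw [mul_assoc, ← hu]; exact u.inv_mul
  have hright : c * (star c * (↑v⁻¹ : S)) = 1 := by
    rw [← mul_assoc, ← hv]; exact v.mul_inv
  have heq : (↑u⁻¹ : S) * star c = star c * (↑v⁻¹ : S) := by
    calc (↑u⁻¹ : S) * star c = ((↑u⁻¹ : S) * star c) * (c * (star c * (↑v⁻¹ : S))) := by
          rw [hright, mul_one]
      _ = (((↑u⁻¹ : S) * star c) * c) * (star c * (↑v⁻¹ : S)) := by simp only [mul_assoc]
      _ = star c * (↑v⁻¹ : S) := by rw [hleft, one_mul]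
  have hcunit : IsUnit c := ⟨⟨c, (↑u⁻¹ : S) * star c, by rw [heq]; exact hright, hleft⟩, rfl⟩
  exact spectrum.notMem_iff.mpr hcunit hz
end

section
/- Let A be a unital Hermitian Banach *-algebra and let a, b be positive elements of A. Then the product ab is a positive element of A if and only if a and b commute. -/
open WeakDual

lemma exists_mul_of_mem_spectrum_mul {A : Type*} [NormedRing A] [NormedAlgebra ℂ A]
    [CompleteSpace A] (a b : A) (hcomm : a * b = b * a) {z : ℂ}
    (hz : z ∈ spectrum ℂ (a * b)) :
    ∃ x ∈ spectrum ℂ a, ∃ y ∈ spectrum ℂ b, z = x * y := by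
  set S : Set A := {a, b} with hS
  set B : Subalgebra ℂ A := Subalgebra.centralizer ℂ S.centralizer with hB
  have hSsub : S ⊆ S.centralizer := by
    rintro x (rfl | rfl) y (rfl | rfl) <;> simp_all
  have hBsub : (B : Set A) ⊆ S.centralizer := by
    rw [hB, Subalgebra.coe_centralizer]
    exact Set.centralizer_subset hSsub
  have haB : a ∈ B := by
    intro g hg
    exact (hg a (by simp [hS])).symm
  have hbB : b ∈ B := by
    intro g hg
    exact (hg b (by simp [hS])).symm
  -- commutativity
  have hcomm' : ∀ x y : B, x * y = y * x := by
    rintro ⟨x, hx⟩ ⟨y, hy⟩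
    ext
    exact (hx y (hBsub hy)).symm
  -- inverse closedness
  have hinv : ∀ y : B, IsUnit (y : A) → IsUnit y := by
    rintro y hy
    have hmem : ((hy.unit⁻¹ : Aˣ) : A) ∈ B := by
      intro g hg
      have h1 : g * ((hy.unit : Aˣ) : A) = ((hy.unit : Aˣ) : A) * g := by
        rw [hy.unit_spec]; exact y.2 g hg
      calc g * ((hy.unit⁻¹ : Aˣ) : A)
          = ((hy.unit⁻¹ : Aˣ) : A) * (((hy.unit : Aˣ) : A) * g) * ((hy.unit⁻¹ : Aˣ) : A) := by
            rw [Units.inv_mul_cancel_left]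
        _ = ((hy.unit⁻¹ : Aˣ) : A) * (g * ((hy.unit : Aˣ) : A)) * ((hy.unit⁻¹ : Aˣ) : A) := by
            rw [← h1]
        _ = ((hy.unit⁻¹ : Aˣ) : A) * g := by
            rw [mul_assoc, Units.mul_inv_cancel_right]
    refine ⟨⟨y, ⟨_, hmem⟩, ?_, ?_⟩, rfl⟩ <;> ext <;> simp
  -- spectra agree
  have hspec : ∀ y : B, spectrum ℂ y = spectrum ℂ (y : A) := by
    intro y
    ext w
    rw [spectrum.mem_iff, spectrum.mem_iff, not_iff_not]
    constructor
    · intro h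
      have := h.map B.val
      simpa using this
    · intro h
      refine hinv _ ?_
      simpa using h
  -- closedness and instances
  have hclosed : IsClosed (B : Set A) := by
    have : (B : Set A) = ⋂ m ∈ S.centralizer, {c : A | m * c = c * m} := by
      ext c
      simp only [Set.mem_iInter, Set.mem_setOf_eq, SetLike.mem_coe]
      exact ⟨fun h m hm => h m hm, fun h m hm => h m hm⟩
    rw [this]
    exact isClosed_biInter fun m _ =>
      isClosed_eq (continuous_const.mul continuous_id) (continuous_id.mul continuous_const)
  letI : NormedCommRing B := { (inferInstance : NormedRing B) with mul_comm := hcomm' }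
  haveI : CompleteSpace B := hclosed.completeSpace_coe
  set a' : B := ⟨a, haB⟩
  set b' : B := ⟨b, hbB⟩
  have hz' : z ∈ spectrum ℂ (a' * b') := by
    rw [hspec]
    exact hz
  obtain ⟨f, hf⟩ := WeakDual.CharacterSpace.mem_spectrum_iff_exists.mp hz'
  refine ⟨f a', ?_, f b', ?_, ?_⟩
  · have := AlgHom.apply_mem_spectrum f a'
    rwa [hspec] at this
  · have := AlgHom.apply_mem_spectrum f b'
    rwa [hspec] at this
  · rw [← hf, map_mul]

/-- In a unital Hermitian Banach `*`-algebra, the product of two positive elements is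
positive if and only if the two elements commute. -/
theorem mul_positive_iff_commute
    {A : Type*} [NormedRing A] [NormedAlgebra ℂ A] [CompleteSpace A]
    [StarRing A] [StarModule ℂ A]
    (hHerm : ∀ x : A, IsSelfAdjoint x → ∀ z ∈ spectrum ℂ x, z.im = 0)
    (a b : A)
    (ha : IsSelfAdjoint a) (ha' : ∀ z ∈ spectrum ℂ a, 0 ≤ z.re ∧ z.im = 0)
    (hb : IsSelfAdjoint b) (hb' : ∀ z ∈ spectrum ℂ b, 0 ≤ z.re ∧ z.im = 0) :
    (IsSelfAdjoint (a * b) ∧ ∀ z ∈ spectrum ℂ (a * b), 0 ≤ z.re ∧ z.im = 0) ↔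
      a * b = b * a := by
  constructor
  · rintro ⟨hsa, -⟩
    calc a * b = star (a * b) := hsa.symm
      _ = star b * star a := star_mul a b
      _ = b * a := by rw [ha.star_eq, hb.star_eq]
  · intro hcomm
    refine ⟨?_, ?_⟩
    · show star (a * b) = a * b
      rw [star_mul, ha.star_eq, hb.star_eq, hcomm]
    · intro z hz
      obtain ⟨x, hx, y, hy, rfl⟩ := exists_mul_of_mem_spectrum_mul a b hcomm hz
      obtain ⟨hx1, hx2⟩ := ha' x hx
      obtain ⟨hy1, hy2⟩ := hb' y hy
      constructor
      · simp [Complex.mul_re, hx2, hy2, mul_nonneg hx1 hy1]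
      · simp [Complex.mul_im, hx2, hy2]
end

section
/- Every *-algebra homomorphism from a Banach *-algebra (whose involution is not assumed continuous) to a C*-algebra is continuous. -/
open Unitization Filter Topology

section Aux

variable {A B : Type*}
    [NonUnitalNormedRing A] [CompleteSpace A] [NormedSpace ℂ A]
    [IsScalarTower ℂ A A] [SMulCommClass ℂ A A] [StarRing A] [StarModule ℂ A]
    [NonUnitalNormedRing B] [CompleteSpace B] [NormedSpace ℂ B]
    [IsScalarTower ℂ B B] [SMulCommClass ℂ B B] [StarRing B] [CStarRing B]
    [StarModule ℂ B]

/-- The quasispectrum of an element of a non-unital Banach algebra is contained in the closed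
ball of radius `‖h‖`. -/
private lemma norm_le_of_mem_quasispectrum {h : A} {k : ℂ}
    (hk : k ∈ quasispectrum ℂ h) : ‖k‖ ≤ ‖h‖ := by
  rw [Unitization.quasispectrum_eq_spectrum_inr' ℂ ℂ h,
    ← AlgEquiv.spectrum_eq (WithLp.unitizationAlgEquiv (𝕜 := ℂ) (A := A) ℂ).symm
      ((h : Unitization ℂ A))] at hk
  have hb := spectrum.norm_le_norm_mul_of_mem hk
  have h1 : ‖(1 : WithLp 1 (Unitization ℂ A))‖ = 1 := by
    rw [WithLp.unitization_norm_def]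
    norm_num [show ((WithLp.ofLp (1 : WithLp 1 (Unitization ℂ A)))).toProd.1
        = (1 : ℂ) from rfl,
      show ((WithLp.ofLp (1 : WithLp 1 (Unitization ℂ A)))).toProd.2
        = (0 : A) from rfl]
  have h2 : ‖(WithLp.unitizationAlgEquiv (𝕜 := ℂ) (A := A) ℂ).symm ((h : Unitization ℂ A))‖
      = ‖h‖ := by
    rw [show (WithLp.unitizationAlgEquiv (𝕜 := ℂ) (A := A) ℂ).symm ((h : Unitization ℂ A))
        = (WithLp.equiv 1 (Unitization ℂ A)).symm ((h : Unitization ℂ A)) from rfl]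
    exact WithLp.unitization_norm_inr h
  rw [h1, h2, mul_one] at hb
  exact hb

/-- Key pointwise estimate: a star homomorphism into a C*-algebra is norm-decreasing on
self-adjoint elements, because the norm of the image equals its spectral radius (computed in
the unitization of `B`), and the (quasi)spectrum shrinks under homomorphisms. -/
private lemma norm_apply_le_of_isSelfAdjoint (π : A →⋆ₙₐ[ℂ] B) {h : A}
    (hh : IsSelfAdjoint h) : ‖π h‖ ≤ ‖h‖ := by
  letI : NonUnitalCStarAlgebra B :=
    { toNonUnitalNormedRing := ‹_›, toStarRing := ‹_›, toCompleteSpace := ‹_›,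
      toCStarRing := ‹_›, toNormedSpace := ‹_›, toIsScalarTower := ‹_›,
      toSMulCommClass := ‹_›, toStarModule := ‹_› }
  have hπh : IsSelfAdjoint (π h) := hh.map π
  have hsa : IsSelfAdjoint ((π h : B) : Unitization ℂ B) :=
    hπh.map (inrNonUnitalStarAlgHom ℂ B)
  have key : spectralRadius ℂ ((π h : B) : Unitization ℂ B) ≤ (‖h‖₊ : ENNReal) := by
    rw [spectralRadius]
    refine iSup₂_le fun k hk => ?_
    rw [← Unitization.quasispectrum_eq_spectrum_inr' ℂ ℂ (π h)] at hk
    have hk' : k ∈ quasispectrum ℂ h :=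
      NonUnitalAlgHom.quasispectrum_apply_subset π h hk
    exact_mod_cast norm_le_of_mem_quasispectrum hk'
  rw [hsa.spectralRadius_eq_nnnorm, Unitization.nnnorm_inr] at key
  exact_mod_cast key

end Aux

/-- Every `*`-algebra homomorphism from a (not necessarily unital) Banach `*`-algebra
(with possibly discontinuous involution) to a C*-algebra is continuous. -/
theorem continuous_starAlgHom_of_banach_to_cstar
    {A B : Type*}
    [NonUnitalNormedRing A] [CompleteSpace A] [NormedSpace ℂ A]
    [IsScalarTower ℂ A A] [SMulCommClass ℂ A A] [StarRing A] [StarModule ℂ A]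
    [NonUnitalNormedRing B] [CompleteSpace B] [NormedSpace ℂ B]
    [IsScalarTower ℂ B B] [SMulCommClass ℂ B B] [StarRing B] [CStarRing B]
    [StarModule ℂ B]
    (π : A →⋆ₙₐ[ℂ] B) : Continuous π := by
  -- `H` is the real subspace of self-adjoint elements of `A`.
  let H : Submodule ℝ A :=
    { carrier := {a : A | IsSelfAdjoint a}
      add_mem' := fun ha hb => ha.add hb
      zero_mem' := IsSelfAdjoint.zero A
      smul_mem' := fun r x hx => IsSelfAdjoint.smul (star_trivial r) hx }
  -- `K` is its closure; `π` need not extend continuously to `K`, but is 1-Lipschitz on `H`.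
  let K := H.topologicalClosure
  haveI : CompleteSpace K := H.isClosed_topologicalClosure.completeSpace_coe
  -- The map `(h, k) ↦ h + i k` from `K × K` to `A` is continuous, real-linear and surjective.
  let Lin : K × K →ₗ[ℝ] A :=
    { toFun := fun p => (p.1 : A) + Complex.I • (p.2 : A)
      map_add' := by
        intro p q
        simp only [Prod.fst_add, Prod.snd_add, Submodule.coe_add, smul_add]
        abel
      map_smul' := by
        intro r p
        simp only [Prod.smul_fst, Prod.smul_snd, SetLike.val_smul, RingHom.id_apply, smul_add]
        rw [smul_comm Complex.I r ((p.2 : A))] }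
  let Ψ : K × K →L[ℝ] A := Lin.mkContinuous 2 (by
    intro p
    have h1 : ‖Lin p‖ ≤ ‖(p.1 : A)‖ + ‖Complex.I • (p.2 : A)‖ := norm_add_le _ _
    have h2 : ‖Complex.I • (p.2 : A)‖ = ‖(p.2 : A)‖ := by
      rw [norm_smul, Complex.norm_I, one_mul]
    have h3 : ‖(p.1 : A)‖ ≤ ‖p‖ := norm_fst_le p
    have h4 : ‖(p.2 : A)‖ ≤ ‖p‖ := norm_snd_le p
    calc ‖Lin p‖ ≤ ‖(p.1 : A)‖ + ‖(p.2 : A)‖ := by rw [h2] at h1; exact h1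
      _ ≤ ‖p‖ + ‖p‖ := add_le_add h3 h4
      _ = 2 * ‖p‖ := by ring)
  have hsurj : Function.Surjective Ψ := by
    intro a
    have hmem1 : IsSelfAdjoint ((2⁻¹ : ℂ) • (a + star a)) := by
      rw [IsSelfAdjoint, star_smul, star_add, star_star, add_comm (star a) a]
      congr 1
      simp
    have hmem2 : IsSelfAdjoint ((-(Complex.I) * 2⁻¹) • (a - star a)) := by
      have h1 : star ((-(Complex.I) * 2⁻¹) • (a - star a))
          = (Complex.I * 2⁻¹) • (star a - a) := by
        rw [star_smul, star_sub, star_star]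
        congr 1
        simp
      rw [IsSelfAdjoint, h1, show (Complex.I * 2⁻¹) • (star a - a)
          = ((-(Complex.I) * 2⁻¹)) • (a - star a) by
        rw [← neg_sub a (star a), smul_neg, ← neg_smul, neg_mul]]
    refine ⟨(⟨⟨_, H.le_topologicalClosure hmem1⟩, ⟨_, H.le_topologicalClosure hmem2⟩⟩ :
      K × K), ?_⟩
    show (2⁻¹ : ℂ) • (a + star a) + Complex.I • ((-(Complex.I) * 2⁻¹) • (a - star a)) = a
    rw [smul_smul]
    rw [show Complex.I * (-(Complex.I) * 2⁻¹) = (2⁻¹ : ℂ) by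
      rw [show Complex.I * (-(Complex.I) * 2⁻¹) = -(Complex.I * Complex.I) * 2⁻¹ by ring,
        Complex.I_mul_I]; ring]
    rw [← smul_add, show a + star a + (a - star a) = a + a by abel,
      show (a + a : A) = (2 : ℂ) • a by rw [two_smul], smul_smul]
    norm_num
  -- Open mapping theorem: bounded decompositions `a = h + i k` with `h, k ∈ K`.
  obtain ⟨C, hCpos, hC⟩ := ContinuousLinearMap.exists_preimage_norm_le Ψ hsurj
  -- It suffices to bound `π` by `2 * C`.
  refine AddMonoidHomClass.continuous_of_bound π (2 * C) fun a => ?_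
  obtain ⟨p, hpa, hpnorm⟩ := hC a
  -- approximate the two components by self-adjoint elements of `A`
  have hp1 : (p.1 : A) ∈ closure (H : Set A) := by
    rw [← Submodule.topologicalClosure_coe H]
    exact p.1.2
  have hp2 : (p.2 : A) ∈ closure (H : Set A) := by
    rw [← Submodule.topologicalClosure_coe H]
    exact p.2.2
  obtain ⟨hseq, hsel, hht⟩ := mem_closure_iff_seq_limit.mp hp1
  obtain ⟨kseq, ksel, hkt⟩ := mem_closure_iff_seq_limit.mp hp2
  -- `π` is 1-Lipschitz on self-adjoint elements
  have lip : ∀ x y : A, IsSelfAdjoint x → IsSelfAdjoint y →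
      dist (π x) (π y) ≤ dist x y := by
    intro x y hx hy
    rw [dist_eq_norm, dist_eq_norm, ← map_sub]
    exact norm_apply_le_of_isSelfAdjoint π (hx.sub hy)
  -- hence the images of the approximating sequences converge
  have cauchy : ∀ (u : ℕ → A), (∀ n, u n ∈ (H : Set A)) → CauchySeq u →
      CauchySeq (fun n => π (u n)) := by
    intro u husel hu
    rw [Metric.cauchySeq_iff] at hu ⊢
    intro ε hε
    obtain ⟨N, hN⟩ := hu ε hε
    exact ⟨N, fun m hm n hn =>
      lt_of_le_of_lt (lip _ _ (husel m) (husel n)) (hN m hm n hn)⟩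
  obtain ⟨pl, hpl⟩ := cauchySeq_tendsto_of_complete
    (cauchy hseq hsel hht.cauchySeq)
  obtain ⟨ql, hql⟩ := cauchySeq_tendsto_of_complete
    (cauchy kseq ksel hkt.cauchySeq)
  -- the defect sequence `d n` tends to `0` in `A`, and `star (d n)` also converges in `A`
  set d : ℕ → A := fun n => a - hseq n - Complex.I • kseq n with hd
  have hda : Tendsto d atTop (𝓝 0) := by
    have : Tendsto d atTop (𝓝 (a - (p.1 : A) - Complex.I • (p.2 : A))) :=
      (tendsto_const_nhds.sub hht).sub (hkt.const_smul Complex.I)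
    have ha' : a - (p.1 : A) - Complex.I • (p.2 : A) = 0 := by
      have : (p.1 : A) + Complex.I • (p.2 : A) = a := hpa
      rw [← this]; abel
    rwa [ha'] at this
  have hstar_d : ∀ n, star (d n) = star a - hseq n + Complex.I • kseq n := by
    intro n
    rw [hd]
    simp only [star_sub, star_smul, Complex.star_def, Complex.conj_I]
    rw [(hsel n).star_eq, (ksel n).star_eq, neg_smul]
    abel
  have hdstar : Tendsto (fun n => star (d n)) atTop
      (𝓝 (star a - (p.1 : A) + Complex.I • (p.2 : A))) := by
    simp only [hstar_d]
    exact (tendsto_const_nhds.sub hht).add (hkt.const_smul Complex.I)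
  -- the product `star (d n) * d n` tends to `0` in `A` …
  have hy0 : Tendsto (fun n => star (d n) * d n) atTop (𝓝 0) := by
    have := hdstar.mul hda
    rwa [mul_zero] at this
  -- … is self-adjoint, so its image under `π` tends to `0` in `B`
  have hysa : ∀ n, IsSelfAdjoint (star (d n) * d n) := fun n => by
    rw [IsSelfAdjoint, star_mul, star_star]
  have hπy0 : Tendsto (fun n => π (star (d n) * d n)) atTop (𝓝 0) := by
    rw [tendsto_zero_iff_norm_tendsto_zero]
    have hbound : ∀ n, ‖π (star (d n) * d n)‖ ≤ ‖star (d n) * d n‖ := fun n =>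
      norm_apply_le_of_isSelfAdjoint π (hysa n)
    have hnorm0 : Tendsto (fun n => ‖star (d n) * d n‖) atTop (𝓝 0) := by
      have := hy0.norm
      rwa [norm_zero] at this
    exact squeeze_zero (fun n => norm_nonneg _) hbound hnorm0
  -- on the other hand its image tends to `star z * z` where `z = π a - pl - i ql`
  set z : B := π a - pl - Complex.I • ql with hz
  have hπd : Tendsto (fun n => π (d n)) atTop (𝓝 z) := by
    have heq : ∀ n, π (d n) = π a - π (hseq n) - Complex.I • π (kseq n) := by
      intro n; rw [hd]; simp [map_sub, map_smul]
    simp only [heq]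
    exact (tendsto_const_nhds.sub hpl).sub (hql.const_smul Complex.I)
  have hπy : Tendsto (fun n => π (star (d n) * d n)) atTop (𝓝 (star z * z)) := by
    have heq : ∀ n, π (star (d n) * d n) = star (π (d n)) * π (d n) := by
      intro n; rw [map_mul, map_star]
    simp only [heq]
    exact ((continuous_star.tendsto z).comp hπd).mul hπd
  -- conclude `z = 0` by the C*-identity
  have hzz : star z * z = 0 := tendsto_nhds_unique hπy hπy0
  have hz0 : z = 0 := by
    have hnz := CStarRing.norm_star_mul_self (x := z)
    rw [hzz, norm_zero] at hnz
    have : ‖z‖ = 0 := by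
      rcases mul_self_eq_zero.mp hnz.symm with h
      exact h
    exact norm_eq_zero.mp this
  -- so `π a = pl + i ql`, and both limits are norm-controlled
  have hπa : π a = pl + Complex.I • ql := by
    have : π a - pl - Complex.I • ql = 0 := hz0
    have := sub_eq_zero.mp (by rwa [sub_sub] at this)
    rw [this]
  have hpl_norm : ‖pl‖ ≤ ‖(p.1 : A)‖ := by
    refine le_of_tendsto_of_tendsto' hpl.norm hht.norm fun n => ?_
    exact norm_apply_le_of_isSelfAdjoint π (hsel n)
  have hql_norm : ‖ql‖ ≤ ‖(p.2 : A)‖ := by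
    refine le_of_tendsto_of_tendsto' hql.norm hkt.norm fun n => ?_
    exact norm_apply_le_of_isSelfAdjoint π (ksel n)
  have h1 : ‖(p.1 : A)‖ ≤ ‖p‖ := norm_fst_le p
  have h2 : ‖(p.2 : A)‖ ≤ ‖p‖ := norm_snd_le p
  calc ‖π a‖ = ‖pl + Complex.I • ql‖ := by rw [hπa]
    _ ≤ ‖pl‖ + ‖Complex.I • ql‖ := norm_add_le _ _
    _ = ‖pl‖ + ‖ql‖ := by rw [norm_smul, Complex.norm_I, one_mul]
    _ ≤ ‖p‖ + ‖p‖ := add_le_add (hpl_norm.trans h1) (hql_norm.trans h2)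
    _ = 2 * ‖p‖ := by ring
    _ ≤ 2 * (C * ‖a‖) := by linarith
    _ = 2 * C * ‖a‖ := by ring
end

section
/- (Fuglede–Putnam–Rosenblum) Let A be a unital C*-algebra, let n₁ and n₂ be normal elements of A, and let a ∈ A satisfy a·n₁ = n₂·a. Then a·n₁* = n₂*·a. -/
open NormedSpace

section aux

variable {A : Type*} [NormedRing A] [StarRing A] [CStarRing A]
    [NormedAlgebra ℂ A] [CompleteSpace A] [StarModule ℂ A]

lemma fpr_pow (x y a : A) (h : a * x = y * a) (n : ℕ) : a * x ^ n = y ^ n * a := by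
  induction n with
  | zero => simp
  | succ n ih =>
    rw [pow_succ, pow_succ, ← mul_assoc, ih, mul_assoc, h, ← mul_assoc]

lemma fpr_exp (x y a : A) (h : a * x = y * a) : a * exp x = exp y * a := by
  simp only [exp_eq_tsum ℂ]
  rw [← (expSeries_summable' (𝕂 := ℂ) x).tsum_mul_left a,
    ← (expSeries_summable' (𝕂 := ℂ) y).tsum_mul_right a]
  congr 1
  ext n
  rw [mul_smul_comm, smul_mul_assoc, fpr_pow x y a h n]

lemma fpr_skew (n : A) (z : ℂ) :
    z • star n - (starRingEnd ℂ z) • n ∈ skewAdjoint A := by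
  rw [skewAdjoint.mem_iff]
  simp [star_smul, neg_sub]

end aux

namespace FPRPort

/-- (Fuglede–Putnam–Rosenblum) If `n₁`, `n₂` are normal elements of a unital C*-algebra and
`a * n₁ = n₂ * a`, then `a * n₁* = n₂* * a`. -/
theorem fuglede_putnam_rosenblum
    {A : Type*} [NormedRing A] [StarRing A] [CStarRing A]
    [NormedAlgebra ℂ A] [CompleteSpace A] [StarModule ℂ A]
    (n₁ n₂ a : A) (h₁ : IsStarNormal n₁) (h₂ : IsStarNormal n₂)
    (h : a * n₁ = n₂ * a) : a * star n₁ = star n₂ * a := by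
  rcases subsingleton_or_nontrivial A with hs | hn
  · exact Subsingleton.elim _ _
  let +nondep : NormedAlgebra ℚ A := .restrictScalars ℚ ℂ A
  -- intertwining for exponentials of scalar multiples of n₁, n₂
  have hint : ∀ z : ℂ, a * exp (z • n₁) = exp (z • n₂) * a := fun z =>
    fpr_exp _ _ _ (by rw [mul_smul_comm, smul_mul_assoc, h])
  -- the entire function
  set F : ℂ → A := fun z => exp (z • star n₂) * a * exp (z • (-star n₁)) with hF
  -- commutation facts
  have hc₁ : ∀ z : ℂ, Commute (z • star n₁ - (starRingEnd ℂ z) • n₁) ((starRingEnd ℂ z) • n₁) :=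
    fun z => ((h₁.star_comm_self.smul_left z).smul_right _).sub_left (Commute.refl _)
  have hc₂ : ∀ z : ℂ, Commute (z • star n₂ - (starRingEnd ℂ z) • n₂) ((starRingEnd ℂ z) • n₂) :=
    fun z => ((h₂.star_comm_self.smul_left z).smul_right _).sub_left (Commute.refl _)
  -- boundedness
  have hbound : ∀ z : ℂ, ‖F z‖ ≤ ‖a‖ := by
    intro z
    have e₂ : exp (z • star n₂)
        = exp (z • star n₂ - (starRingEnd ℂ z) • n₂) * exp ((starRingEnd ℂ z) • n₂) := by
      rw [← exp_add_of_commute (hc₂ z), sub_add_cancel]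
    have e₁ : exp (z • (-star n₁))
        = exp (-((starRingEnd ℂ z) • n₁))
          * exp (-(z • star n₁ - (starRingEnd ℂ z) • n₁)) := by
      rw [← exp_add_of_commute ((hc₁ z).neg_left.neg_right.symm)]
      congr 1
      rw [smul_neg]
      abel
    have key : exp ((starRingEnd ℂ z) • n₂) * a * exp (-((starRingEnd ℂ z) • n₁)) = a := by
      rw [← hint ((starRingEnd ℂ z)), mul_assoc, ← exp_add_of_commute
        ((Commute.refl ((starRingEnd ℂ z) • n₁)).neg_right), add_neg_cancel, exp_zero, mul_one]
    have : F z = exp (z • star n₂ - (starRingEnd ℂ z) • n₂) * a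
        * exp (-(z • star n₁ - (starRingEnd ℂ z) • n₁)) := by
      rw [hF]
      simp only
      rw [e₂, e₁]
      calc exp (z • star n₂ - (starRingEnd ℂ z) • n₂) * exp ((starRingEnd ℂ z) • n₂) * a *
            (exp (-((starRingEnd ℂ z) • n₁)) * exp (-(z • star n₁ - (starRingEnd ℂ z) • n₁)))
          = exp (z • star n₂ - (starRingEnd ℂ z) • n₂) *
            (exp ((starRingEnd ℂ z) • n₂) * a * exp (-((starRingEnd ℂ z) • n₁))) *
            exp (-(z • star n₁ - (starRingEnd ℂ z) • n₁)) := by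
            simp only [mul_assoc]
        _ = _ := by rw [key]
    rw [this]
    have hu₂ : exp (z • star n₂ - (starRingEnd ℂ z) • n₂) ∈ unitary A :=
      exp_mem_unitary_of_mem_skewAdjoint (fpr_skew n₂ z)
    have hu₁ : exp (-(z • star n₁ - (starRingEnd ℂ z) • n₁)) ∈ unitary A :=
      exp_mem_unitary_of_mem_skewAdjoint (neg_mem (fpr_skew n₁ z))
    rw [CStarRing.norm_mul_mem_unitary _ hu₁, CStarRing.norm_mem_unitary_mul _ hu₂]
  -- differentiability
  have hdiff : Differentiable ℂ F := by
    have d₂ : Differentiable ℂ fun z : ℂ => exp (z • star n₂) :=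
      fun z => (hasDerivAt_exp_smul_const (𝕂 := ℂ) (star n₂) z).differentiableAt
    have d₁ : Differentiable ℂ fun z : ℂ => exp (z • (-star n₁)) :=
      fun z => (hasDerivAt_exp_smul_const (𝕂 := ℂ) (-star n₁) z).differentiableAt
    exact (d₂.mul_const a).mul d₁
  -- Liouville
  have hconst : ∀ z : ℂ, F z = F 0 := by
    intro z
    refine hdiff.apply_eq_apply_of_bounded ?_ z 0
    exact (Metric.isBounded_iff_subset_closedBall 0).2
      ⟨‖a‖, by rintro _ ⟨z, rfl⟩; simpa using hbound z⟩
  have hF0 : F 0 = a := by simp [hF, exp_zero]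
  -- from F ≡ a, deduce exp(z • star n₂) * a = a * exp (z • star n₁)
  have hkey : ∀ z : ℂ, exp (z • star n₂) * a = a * exp (z • star n₁) := by
    intro z
    have := (hconst z).trans hF0
    have hcancel : exp (z • (-star n₁)) * exp (z • star n₁) = 1 := by
      rw [← exp_add_of_commute ((((Commute.refl (star n₁)).neg_left).smul_left z).smul_right z),
        smul_neg, neg_add_cancel, exp_zero]
    calc exp (z • star n₂) * a
        = exp (z • star n₂) * a * (exp (z • (-star n₁)) * exp (z • star n₁)) := by
          rw [hcancel, mul_one]
      _ = F z * exp (z • star n₁) := by rw [hF]; simp only [mul_assoc]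
      _ = a * exp (z • star n₁) := by rw [this]
  -- differentiate at 0
  have hd₂ : HasDerivAt (fun z : ℂ => exp (z • star n₂) * a) (star n₂ * a) 0 := by
    simpa using ((hasDerivAt_exp_smul_const' (𝕂 := ℂ) (star n₂) 0).mul_const a)
  have hd₁ : HasDerivAt (fun z : ℂ => a * exp (z • star n₁)) (a * star n₁) 0 := by
    simpa using ((hasDerivAt_exp_smul_const' (𝕂 := ℂ) (star n₁) 0).const_mul a)
  have : star n₂ * a = a * star n₁ := by
    have hfun : (fun z : ℂ => exp (z • star n₂) * a)
        = fun z : ℂ => a * exp (z • star n₁) := funext hkey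
    exact (hfun ▸ hd₂).unique hd₁
  exact this.symm
end FPRPort
end
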